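/- arXiv:2403.03687 — 2 statements merged into one kernel-verified Lean document; each statement's English description precedes it below -/
import Mathlib

section
/- Let (Y_n)_{n≥0} be a Galton–Watson process with Y_0 = 1 and mean offspring m = E(Y_1) ∈ (0,1). Then (1/n) log P(Y_n > 0) → log m as n → ∞. -/
open MeasureTheory ProbabilityTheory Filter Set
open scoped ENNReal NNReal Topology Classical

noncomputable section

/-- A Galton–Watson process: i.i.d. offspring variables `ξ (k,n)`. -/
structure GW (Ω : Type) [MeasurableSpace Ω] (P : Measure Ω) where
  ξ : ℕ × ℕ → Ω → ℕ
  meas : ∀ p, Measurable (ξ p)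
  indep : iIndepFun ξ P
  ident : ∀ p q, IdentDistrib (ξ p) (ξ q) P P

/-- the population sizes: `Y 0 = 1`, `Y (n+1) = Σ_{k < Y n} ξ (k,n)`. -/
def GW.Y {Ω : Type} [MeasurableSpace Ω] {P : Measure Ω} (g : GW Ω P) : ℕ → Ω → ℕ
  | 0, _ => 1
  | n + 1, ω => ∑ k ∈ Finset.range (g.Y n ω), g.ξ (k, n) ω

section Aux
variable {Ω : Type} [MeasurableSpace Ω] {P : Measure Ω}

/-- finite range sums as tsum with indicator -/
lemma sum_range_eq_tsum (a : ℕ → ℝ≥0∞) (j : ℕ) :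
    (∑ k ∈ Finset.range j, a k) = ∑' k, if k < j then a k else 0 := by
  rw [tsum_eq_sum (s := Finset.range j) (fun b hb => if_neg (by simpa using hb))]
  exact (Finset.sum_congr rfl fun k hk => (if_pos (by simpa using hk)).symm)

lemma meas_sum_range {m' : MeasurableSpace Ω} {f : Ω → ℕ} (hf : Measurable[m'] f)
    {h : ℕ → Ω → ℕ} (hh : ∀ k, Measurable[m'] (h k)) :
    Measurable[m'] (fun ω => ∑ k ∈ Finset.range (f ω), h k ω) := by
  apply measurable_to_countable'
  intro v
  have : (fun ω => ∑ k ∈ Finset.range (f ω), h k ω) ⁻¹' {v} =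
      ⋃ j, ({ω | f ω = j} ∩ {ω | (∑ k ∈ Finset.range j, h k ω) = v}) := by
    ext ω
    simp only [mem_preimage, mem_singleton_iff, mem_iUnion, mem_inter_iff, mem_setOf_eq]
    constructor
    · intro hv; exact ⟨f ω, rfl, hv⟩
    · rintro ⟨j, hj, hv⟩; rw [hj]; exact hv
  rw [this]
  refine MeasurableSet.iUnion fun j => (hf (measurableSet_singleton j)).inter ?_
  exact (Finset.measurable_sum (Finset.range j) (fun k _ => hh k)) (measurableSet_singleton v)

namespace GW
variable (g : GW Ω P)

/-- the σ-algebra generated by the first n generations of offspring variables -/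
def F (n : ℕ) : MeasurableSpace Ω :=
  ⨆ p ∈ {p : ℕ × ℕ | p.2 < n}, MeasurableSpace.comap (g.ξ p) inferInstance

lemma F_le (n : ℕ) : g.F n ≤ ‹MeasurableSpace Ω› :=
  iSup₂_le fun p _ => (g.meas p).comap_le

lemma F_mono {n m : ℕ} (h : n ≤ m) : g.F n ≤ g.F m := by
  refine iSup₂_le fun p hp => ?_
  exact le_iSup₂ (f := fun p (_ : p ∈ {p : ℕ × ℕ | p.2 < m}) =>
    MeasurableSpace.comap (g.ξ p) inferInstance) p (lt_of_lt_of_le hp h)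

lemma xi_meas_F {k n N : ℕ} (h : n < N) : Measurable[g.F N] (g.ξ (k, n)) := by
  have h1 : MeasurableSpace.comap (g.ξ (k, n)) inferInstance ≤ g.F N :=
    le_iSup₂ (f := fun p (_ : p ∈ {p : ℕ × ℕ | p.2 < N}) =>
      MeasurableSpace.comap (g.ξ p) inferInstance) (k, n) h
  exact (Measurable.of_comap_le le_rfl).mono h1 le_rfl

lemma Y_meas_F (n : ℕ) : Measurable[g.F n] (g.Y n) := by
  induction n with
  | zero => exact measurable_const
  | succ n ih =>
    show Measurable[g.F (n+1)] fun ω => ∑ k ∈ Finset.range (g.Y n ω), g.ξ (k, n) ω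
    exact meas_sum_range (ih.mono (g.F_mono (Nat.le_succ n)) le_rfl)
      (fun k => g.xi_meas_F (Nat.lt_succ_self n))

lemma Y_meas (n : ℕ) : Measurable (g.Y n) := (g.Y_meas_F n).mono (g.F_le n) le_rfl

end GW
end Aux

section Moments
variable {Ω : Type} [MeasurableSpace Ω] {P : Measure Ω} [IsProbabilityMeasure P]

lemma lint_nat (f : Ω → ℕ) (hf : Measurable f) :
    ∫⁻ ω, (f ω : ℝ≥0∞) ∂P = ∑' k, P {ω | k < f ω} := by
  have hms : ∀ k : ℕ, MeasurableSet {ω | k < f ω} := fun k =>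
    hf (show MeasurableSet {j | k < j} from trivial)
  have h1 : ∀ ω, ((f ω : ℝ≥0∞)) = ∑' k, {ω | k < f ω}.indicator (fun _ => (1:ℝ≥0∞)) ω := by
    intro ω
    rw [show ((f ω : ℝ≥0∞)) = ∑ k ∈ Finset.range (f ω), (1:ℝ≥0∞) by simp]
    rw [tsum_eq_sum (s := Finset.range (f ω))
      (fun b hb => by simp [Set.indicator_apply, Set.mem_setOf_eq, by simpa using hb])]
    exact Finset.sum_congr rfl fun k hk => by
      simp [Set.indicator_apply, Set.mem_setOf_eq, by simpa using hk]
  simp_rw [h1]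
  rw [lintegral_tsum (fun k => (measurable_const.indicator (hms k)).aemeasurable)]
  exact tsum_congr fun k => lintegral_indicator_one (hms k)

namespace GW
variable (g : GW Ω P)

/-- the offspring mean in `ℝ≥0∞` -/
def mu : ℝ≥0∞ := ∫⁻ ω, (g.ξ (0, 0) ω : ℝ≥0∞) ∂P

lemma lint_comp (φ : ℕ → ℝ≥0∞) (p : ℕ × ℕ) :
    ∫⁻ ω, φ (g.ξ p ω) ∂P = ∫⁻ ω, φ (g.ξ (0, 0) ω) ∂P :=
  ((g.ident p (0, 0)).comp (measurable_from_top (f := φ))).lintegral_eq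

lemma indep_F (n k : ℕ) :
    Indep (g.F n) (MeasurableSpace.comap (g.ξ (k, n)) inferInstance) P := by
  have h := indep_biSup_compl (fun p => (g.meas p).comap_le) ((iIndepFun_iff_iIndep _ _ _).1 g.indep) {p : ℕ × ℕ | p.2 < n}
  refine indep_of_indep_of_le_right h ?_
  refine le_iSup₂ (f := fun p (_ : p ∈ {p : ℕ × ℕ | p.2 < n}ᶜ) =>
    MeasurableSpace.comap (g.ξ p) inferInstance) (k, n) ?_
  simp

lemma indep_F2 (n k l : ℕ) (hkl : k ≠ l) :
    Indep (g.F n ⊔ MeasurableSpace.comap (g.ξ (k, n)) inferInstance)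
      (MeasurableSpace.comap (g.ξ (l, n)) inferInstance) P := by
  have h := indep_biSup_compl (fun p => (g.meas p).comap_le) ((iIndepFun_iff_iIndep _ _ _).1 g.indep)
    ({p : ℕ × ℕ | p.2 < n} ∪ {(k, n)})
  refine indep_of_indep_of_le_right (indep_of_indep_of_le_left h ?_) ?_
  · refine sup_le ?_ ?_
    · refine iSup₂_le fun p hp => ?_
      exact le_iSup₂ (f := fun p (_ : p ∈ ({p : ℕ × ℕ | p.2 < n} ∪ {(k, n)})) =>
        MeasurableSpace.comap (g.ξ p) inferInstance) p (Or.inl hp)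
    · exact le_iSup₂ (f := fun p (_ : p ∈ ({p : ℕ × ℕ | p.2 < n} ∪ {(k, n)})) =>
        MeasurableSpace.comap (g.ξ p) inferInstance) (k, n) (Or.inr rfl)
  · refine le_iSup₂ (f := fun p (_ : p ∈ ({p : ℕ × ℕ | p.2 < n} ∪ {(k, n)})ᶜ) =>
      MeasurableSpace.comap (g.ξ p) inferInstance) (l, n) ?_
    simp [hkl.symm, Prod.ext_iff]

lemma lint_mul (n k : ℕ) {f : Ω → ℝ≥0∞} (hf : Measurable[g.F n] f) (φ : ℕ → ℝ≥0∞) :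
    ∫⁻ ω, f ω * φ (g.ξ (k, n) ω) ∂P
      = (∫⁻ ω, f ω ∂P) * ∫⁻ ω, φ (g.ξ (0, 0) ω) ∂P := by
  rw [← g.lint_comp φ (k, n)]
  exact lintegral_mul_eq_lintegral_mul_lintegral_of_independent_measurableSpace
    (g.F_le n) (g.meas (k, n)).comap_le (g.indep_F n k) hf
    ((measurable_from_top (f := φ)).comp (Measurable.of_comap_le le_rfl))

lemma lint_mul2 (n k l : ℕ) (hkl : k ≠ l) {f : Ω → ℝ≥0∞} (hf : Measurable[g.F n] f)
    (φ ψ : ℕ → ℝ≥0∞) :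
    ∫⁻ ω, f ω * φ (g.ξ (k, n) ω) * ψ (g.ξ (l, n) ω) ∂P
      = (∫⁻ ω, f ω ∂P) * (∫⁻ ω, φ (g.ξ (0, 0) ω) ∂P) * ∫⁻ ω, ψ (g.ξ (0, 0) ω) ∂P := by
  have h1 : ∫⁻ ω, f ω * φ (g.ξ (k, n) ω) * ψ (g.ξ (l, n) ω) ∂P
      = (∫⁻ ω, f ω * φ (g.ξ (k, n) ω) ∂P) * ∫⁻ ω, ψ (g.ξ (l, n) ω) ∂P := by
    refine lintegral_mul_eq_lintegral_mul_lintegral_of_independent_measurableSpace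
      (sup_le (g.F_le n) (g.meas (k, n)).comap_le) (g.meas (l, n)).comap_le
      (g.indep_F2 n k l hkl) ?_ ?_
    · exact (hf.mono le_sup_left le_rfl).mul
        (((measurable_from_top (f := φ)).comp (Measurable.of_comap_le le_rfl)).mono
          le_sup_right le_rfl)
    · exact (measurable_from_top (f := ψ)).comp (Measurable.of_comap_le le_rfl)
  rw [h1, g.lint_mul n k hf φ, g.lint_comp ψ (l, n)]

lemma lint_Y (n : ℕ) : ∫⁻ ω, (g.Y n ω : ℝ≥0∞) ∂P = g.mu ^ n := by
  induction n with
  | zero => simp [GW.Y]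
  | succ n ih =>
    have hms : ∀ k : ℕ, MeasurableSet[g.F n] {ω | k < g.Y n ω} := fun k =>
      g.Y_meas_F n (show MeasurableSet {j | k < j} from trivial)
    have hmsT : ∀ k : ℕ, MeasurableSet {ω | k < g.Y n ω} := fun k => g.F_le n _ (hms k)
    have key : ∫⁻ ω, (g.Y (n+1) ω : ℝ≥0∞) ∂P
        = ∑' k, ∫⁻ ω, {ω | k < g.Y n ω}.indicator (fun _ => (1:ℝ≥0∞)) ω
            * (g.ξ (k, n) ω : ℝ≥0∞) ∂P := by
      calc ∫⁻ ω, (g.Y (n+1) ω : ℝ≥0∞) ∂P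
          = ∫⁻ ω, ∑' k, {ω | k < g.Y n ω}.indicator (fun _ => (1:ℝ≥0∞)) ω
              * (g.ξ (k, n) ω : ℝ≥0∞) ∂P := by
            congr 1; ext ω
            show ((∑ k ∈ Finset.range (g.Y n ω), g.ξ (k, n) ω : ℕ) : ℝ≥0∞) = _
            push_cast
            rw [sum_range_eq_tsum (fun k => (g.ξ (k, n) ω : ℝ≥0∞)) (g.Y n ω)]
            exact tsum_congr fun k => by
              by_cases h : k < g.Y n ω <;> simp [h, Set.indicator_apply, Set.mem_setOf_eq]
        _ = _ := lintegral_tsum (fun k => ((measurable_const.indicator (hmsT k)).mul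
              ((measurable_from_top (f := fun j : ℕ => (j : ℝ≥0∞))).comp
                (g.meas (k, n)))).aemeasurable)
    rw [key]
    have : ∀ k : ℕ, ∫⁻ ω, {ω | k < g.Y n ω}.indicator (fun _ => (1:ℝ≥0∞)) ω
        * (g.ξ (k, n) ω : ℝ≥0∞) ∂P = P {ω | k < g.Y n ω} * g.mu := by
      intro k
      rw [g.lint_mul n k (measurable_const.indicator (hms k)) (fun j => (j : ℝ≥0∞))]
      congr 1
      exact lintegral_indicator_one (μ := P) (hmsT k)
    simp_rw [this]
    rw [ENNReal.tsum_mul_right, ← lint_nat (g.Y n) (g.Y_meas n), ih]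
    ring

end GW
end Moments

section Moments2
variable {Ω : Type} [MeasurableSpace Ω] {P : Measure Ω} [IsProbabilityMeasure P]

namespace GW
variable (g : GW Ω P)

/-- the offspring second moment in `ℝ≥0∞` -/
def beta : ℝ≥0∞ := ∫⁻ ω, (g.ξ (0, 0) ω : ℝ≥0∞) * (g.ξ (0, 0) ω : ℝ≥0∞) ∂P

lemma lint_Y_sq_rec (n : ℕ) :
    ∫⁻ ω, (g.Y (n+1) ω : ℝ≥0∞) * (g.Y (n+1) ω : ℝ≥0∞) ∂P
      ≤ g.mu * g.mu * ∫⁻ ω, (g.Y n ω : ℝ≥0∞) * (g.Y n ω : ℝ≥0∞) ∂P + g.beta * g.mu ^ n := by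
  classical
  set I : ℕ → Ω → ℝ≥0∞ := fun k ω => {ω | k < g.Y n ω}.indicator (fun _ => (1:ℝ≥0∞)) ω with hI
  have hms : ∀ k : ℕ, MeasurableSet[g.F n] {ω | k < g.Y n ω} := fun k =>
    g.Y_meas_F n (show MeasurableSet {j | k < j} from trivial)
  have hmsT : ∀ k : ℕ, MeasurableSet {ω | k < g.Y n ω} := fun k => g.F_le n _ (hms k)
  have hIF : ∀ k, Measurable[g.F n] (I k) := fun k => measurable_const.indicator (hms k)
  have hIT : ∀ k, Measurable (I k) := fun k => measurable_const.indicator (hmsT k)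
  have hXi : ∀ k, Measurable (fun ω => (g.ξ (k, n) ω : ℝ≥0∞)) := fun k =>
    (measurable_from_top (f := fun j : ℕ => (j : ℝ≥0∞))).comp (g.meas (k, n))
  have hII : ∀ k ω, I k ω * I k ω = I k ω := by
    intro k ω
    by_cases h : k < g.Y n ω <;> simp [hI, Set.indicator_apply, Set.mem_setOf_eq, h]
  have hPI : ∀ k, ∫⁻ ω, I k ω ∂P = P {ω | k < g.Y n ω} := fun k => by
    rw [hI]; exact lintegral_indicator_one (μ := P) (hmsT k)
  -- pointwise representation of `Y n` and `Y (n+1)`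
  have hrepn : ∀ ω, ((g.Y n ω : ℝ≥0∞)) = ∑' k, I k ω := by
    intro ω
    rw [show ((g.Y n ω : ℝ≥0∞)) = ∑ k ∈ Finset.range (g.Y n ω), (1:ℝ≥0∞) by simp]
    rw [tsum_eq_sum (s := Finset.range (g.Y n ω))
      (fun b hb => by simp [hI, Set.indicator_apply, Set.mem_setOf_eq, by simpa using hb])]
    exact Finset.sum_congr rfl fun k hk => by
      simp [hI, Set.indicator_apply, Set.mem_setOf_eq, by simpa using hk]
  have hrep : ∀ ω, ((g.Y (n+1) ω : ℝ≥0∞)) = ∑' k, I k ω * (g.ξ (k, n) ω : ℝ≥0∞) := by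
    intro ω
    show ((∑ k ∈ Finset.range (g.Y n ω), g.ξ (k, n) ω : ℕ) : ℝ≥0∞) = _
    push_cast
    rw [sum_range_eq_tsum (fun k => (g.ξ (k, n) ω : ℝ≥0∞)) (g.Y n ω)]
    exact tsum_congr fun k => by
      by_cases h : k < g.Y n ω <;> simp [hI, h, Set.indicator_apply, Set.mem_setOf_eq]
  have hsq : ∀ ω, (g.Y (n+1) ω : ℝ≥0∞) * (g.Y (n+1) ω : ℝ≥0∞)
      = ∑' k, ∑' l, (I k ω * (g.ξ (k, n) ω : ℝ≥0∞)) * (I l ω * (g.ξ (l, n) ω : ℝ≥0∞)) := by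
    intro ω
    rw [hrep ω, ← ENNReal.tsum_mul_right]
    exact tsum_congr fun k => by rw [← ENNReal.tsum_mul_left]
  have hsqn : ∀ ω, (g.Y n ω : ℝ≥0∞) * (g.Y n ω : ℝ≥0∞) = ∑' k, ∑' l, I k ω * I l ω := by
    intro ω
    rw [hrepn ω, ← ENNReal.tsum_mul_right]
    exact tsum_congr fun k => by rw [← ENNReal.tsum_mul_left]
  have hmeas_term : ∀ k l, Measurable (fun ω =>
      (I k ω * (g.ξ (k, n) ω : ℝ≥0∞)) * (I l ω * (g.ξ (l, n) ω : ℝ≥0∞))) := fun k l =>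
    ((hIT k).mul (hXi k)).mul ((hIT l).mul (hXi l))
  have hswap : ∫⁻ ω, (g.Y (n+1) ω : ℝ≥0∞) * (g.Y (n+1) ω : ℝ≥0∞) ∂P
      = ∑' (k : ℕ) (l : ℕ), ∫⁻ ω,
          (I k ω * (g.ξ (k, n) ω : ℝ≥0∞)) * (I l ω * (g.ξ (l, n) ω : ℝ≥0∞)) ∂P := by
    calc ∫⁻ ω, (g.Y (n+1) ω : ℝ≥0∞) * (g.Y (n+1) ω : ℝ≥0∞) ∂P
        = ∫⁻ ω, ∑' (k : ℕ) (l : ℕ),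
            (I k ω * (g.ξ (k, n) ω : ℝ≥0∞)) * (I l ω * (g.ξ (l, n) ω : ℝ≥0∞)) ∂P := by
          exact lintegral_congr fun ω => hsq ω
      _ = _ := by
          rw [lintegral_tsum (fun k =>
            (Measurable.ennreal_tsum (fun l => hmeas_term k l)).aemeasurable)]
          exact tsum_congr fun k => lintegral_tsum (fun l => (hmeas_term k l).aemeasurable)
  have hswapn : ∫⁻ ω, (g.Y n ω : ℝ≥0∞) * (g.Y n ω : ℝ≥0∞) ∂P
      = ∑' (k : ℕ) (l : ℕ), ∫⁻ ω, I k ω * I l ω ∂P := by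
    calc ∫⁻ ω, (g.Y n ω : ℝ≥0∞) * (g.Y n ω : ℝ≥0∞) ∂P
        = ∫⁻ ω, ∑' (k : ℕ) (l : ℕ), I k ω * I l ω ∂P := lintegral_congr fun ω => hsqn ω
      _ = _ := by
          rw [lintegral_tsum (f := fun k ω => ∑' l, I k ω * I l ω) (fun k =>
            (Measurable.ennreal_tsum (fun l => (hIT k).mul (hIT l))).aemeasurable)]
          exact tsum_congr fun k => lintegral_tsum (fun l => ((hIT k).mul (hIT l)).aemeasurable)
  have hval : ∀ k l, ∫⁻ ω,
      (I k ω * (g.ξ (k, n) ω : ℝ≥0∞)) * (I l ω * (g.ξ (l, n) ω : ℝ≥0∞)) ∂P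
      ≤ (∫⁻ ω, I k ω * I l ω ∂P) * (g.mu * g.mu)
        + (if k = l then (∫⁻ ω, I k ω ∂P) * g.beta else 0) := by
    intro k l
    by_cases hkl : k = l
    · subst hkl
      have heq : (fun ω => (I k ω * (g.ξ (k, n) ω : ℝ≥0∞)) * (I k ω * (g.ξ (k, n) ω : ℝ≥0∞)))
          = fun ω => I k ω * ((g.ξ (k, n) ω : ℝ≥0∞) * (g.ξ (k, n) ω : ℝ≥0∞)) := by
        funext ω
        calc (I k ω * (g.ξ (k, n) ω : ℝ≥0∞)) * (I k ω * (g.ξ (k, n) ω : ℝ≥0∞))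
            = (I k ω * I k ω) * ((g.ξ (k, n) ω : ℝ≥0∞) * (g.ξ (k, n) ω : ℝ≥0∞)) := by ring
          _ = _ := by rw [hII]
      have : ∫⁻ ω, (I k ω * (g.ξ (k, n) ω : ℝ≥0∞)) * (I k ω * (g.ξ (k, n) ω : ℝ≥0∞)) ∂P
          = (∫⁻ ω, I k ω ∂P) * g.beta := by
        calc ∫⁻ ω, (I k ω * (g.ξ (k, n) ω : ℝ≥0∞)) * (I k ω * (g.ξ (k, n) ω : ℝ≥0∞)) ∂P
            = ∫⁻ ω, I k ω * ((g.ξ (k, n) ω : ℝ≥0∞) * (g.ξ (k, n) ω : ℝ≥0∞)) ∂P := by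
              rw [heq]
          _ = (∫⁻ ω, I k ω ∂P) * g.beta :=
              g.lint_mul n k (hIF k) (fun j => (j : ℝ≥0∞) * (j : ℝ≥0∞))
      rw [this, if_pos rfl]
      exact le_add_self
    · have heq : (fun ω => (I k ω * (g.ξ (k, n) ω : ℝ≥0∞)) * (I l ω * (g.ξ (l, n) ω : ℝ≥0∞)))
          = fun ω => ((I k ω * I l ω) * (g.ξ (k, n) ω : ℝ≥0∞)) * (g.ξ (l, n) ω : ℝ≥0∞) := by
        funext ω; ring
      have : ∫⁻ ω, (I k ω * (g.ξ (k, n) ω : ℝ≥0∞)) * (I l ω * (g.ξ (l, n) ω : ℝ≥0∞)) ∂P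
          = ((∫⁻ ω, I k ω * I l ω ∂P) * g.mu) * g.mu := by
        calc ∫⁻ ω, (I k ω * (g.ξ (k, n) ω : ℝ≥0∞)) * (I l ω * (g.ξ (l, n) ω : ℝ≥0∞)) ∂P
            = ∫⁻ ω, ((I k ω * I l ω) * (g.ξ (k, n) ω : ℝ≥0∞)) * (g.ξ (l, n) ω : ℝ≥0∞) ∂P := by
              rw [heq]
          _ = _ := g.lint_mul2 n k l hkl ((hIF k).mul (hIF l)) (fun j => (j : ℝ≥0∞))
              (fun j => (j : ℝ≥0∞))
      rw [this, if_neg hkl, add_zero, mul_assoc]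
  calc ∫⁻ ω, (g.Y (n+1) ω : ℝ≥0∞) * (g.Y (n+1) ω : ℝ≥0∞) ∂P
      = ∑' (k : ℕ) (l : ℕ), ∫⁻ ω,
          (I k ω * (g.ξ (k, n) ω : ℝ≥0∞)) * (I l ω * (g.ξ (l, n) ω : ℝ≥0∞)) ∂P := hswap
    _ ≤ ∑' (k : ℕ) (l : ℕ), ((∫⁻ ω, I k ω * I l ω ∂P) * (g.mu * g.mu)
          + (if k = l then (∫⁻ ω, I k ω ∂P) * g.beta else 0)) :=
        ENNReal.tsum_le_tsum fun k => ENNReal.tsum_le_tsum fun l => hval k l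
    _ = (∑' (k : ℕ) (l : ℕ), (∫⁻ ω, I k ω * I l ω ∂P)) * (g.mu * g.mu)
          + ∑' (k : ℕ), (∫⁻ ω, I k ω ∂P) * g.beta := by
        rw [← ENNReal.tsum_mul_right]
        rw [← ENNReal.tsum_add]
        refine tsum_congr fun k => ?_
        rw [ENNReal.tsum_add, ENNReal.tsum_mul_right]
        congr 1
        calc (∑' (l : ℕ), if k = l then (∫⁻ ω, I k ω ∂P) * g.beta else 0)
            = ∑' (l : ℕ), if l = k then (∫⁻ ω, I k ω ∂P) * g.beta else 0 :=
              tsum_congr fun l => by simp [eq_comm]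
          _ = _ := tsum_ite_eq k _
    _ = (g.mu * g.mu) * ∫⁻ ω, (g.Y n ω : ℝ≥0∞) * (g.Y n ω : ℝ≥0∞) ∂P + g.beta * g.mu ^ n := by
        rw [← hswapn]
        congr 1
        · rw [mul_comm]
        · rw [ENNReal.tsum_mul_right]
          have hYn : (∑' (k : ℕ), ∫⁻ ω, I k ω ∂P) = g.mu ^ n := by
            simp_rw [hPI]
            rw [← lint_nat (g.Y n) (g.Y_meas n), g.lint_Y n]
          rw [hYn, mul_comm]

end GW
end Moments2

section PZ
variable {Ω : Type} [MeasurableSpace Ω] {P : Measure Ω} [IsProbabilityMeasure P]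

namespace GW
variable (g : GW Ω P)

lemma lint_Y_sq_le (hmu1 : g.mu ≤ 1) (n : ℕ) :
    g.mu * ∫⁻ ω, (g.Y n ω : ℝ≥0∞) * (g.Y n ω : ℝ≥0∞) ∂P
      ≤ g.mu ^ (2*n+1) + g.beta * n * g.mu ^ n := by
  induction n with
  | zero => simp [GW.Y]
  | succ n ih =>
    push_cast
    have step := g.lint_Y_sq_rec n
    calc g.mu * ∫⁻ ω, (g.Y (n+1) ω : ℝ≥0∞) * (g.Y (n+1) ω : ℝ≥0∞) ∂P
        ≤ g.mu * (g.mu * g.mu * ∫⁻ ω, (g.Y n ω : ℝ≥0∞) * (g.Y n ω : ℝ≥0∞) ∂P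
            + g.beta * g.mu ^ n) := mul_le_mul_right step _
      _ = g.mu * g.mu * (g.mu * ∫⁻ ω, (g.Y n ω : ℝ≥0∞) * (g.Y n ω : ℝ≥0∞) ∂P)
            + g.beta * g.mu ^ (n+1) := by ring
      _ ≤ g.mu * g.mu * (g.mu ^ (2*n+1) + g.beta * n * g.mu ^ n)
            + g.beta * g.mu ^ (n+1) := by
          exact add_le_add_left (mul_le_mul_right ih _) _
      _ = g.mu ^ (2*n+3) + g.beta * n * g.mu ^ (n+2) + g.beta * g.mu ^ (n+1) := by ring
      _ ≤ g.mu ^ (2*(n+1)+1) + g.beta * ((n : ℝ≥0∞)+1) * g.mu ^ (n+1) := by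
          have hp : g.mu ^ (n+2) ≤ g.mu ^ (n+1) :=
            pow_le_pow_of_le_one zero_le hmu1 (by omega)
          have : (2*(n+1)+1) = 2*n+3 := by ring
          rw [this]
          calc g.mu ^ (2*n+3) + g.beta * n * g.mu ^ (n+2) + g.beta * g.mu ^ (n+1)
              ≤ g.mu ^ (2*n+3) + g.beta * n * g.mu ^ (n+1) + g.beta * g.mu ^ (n+1) :=
                add_le_add_left (add_le_add_right (mul_le_mul_right hp _) _) _
            _ = g.mu ^ (2*n+3) + g.beta * ((n : ℝ≥0∞)+1) * g.mu ^ (n+1) := by ring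

end GW

/-- Paley–Zygmund type inequality -/
lemma paley_zygmund (f : Ω → ℕ) (hf : Measurable f) :
    (∫⁻ ω, (f ω : ℝ≥0∞) ∂P) * (∫⁻ ω, (f ω : ℝ≥0∞) ∂P)
      ≤ (∫⁻ ω, (f ω : ℝ≥0∞) * (f ω : ℝ≥0∞) ∂P) * P {ω | 0 < f ω} := by
  have hA : MeasurableSet {ω | 0 < f ω} := hf (show MeasurableSet {j | 0 < j} from trivial)
  set I : Ω → ℝ≥0∞ := fun ω => {ω | 0 < f ω}.indicator (fun _ => (1:ℝ≥0∞)) ω with hI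
  have hrep : ∀ ω, ((f ω : ℝ≥0∞)) = (fun ω => (f ω : ℝ≥0∞)) ω * I ω := by
    intro ω
    by_cases h : 0 < f ω
    · simp [hI, Set.indicator_apply, Set.mem_setOf_eq, h]
    · simp [hI, Set.indicator_apply, Set.mem_setOf_eq, h, Nat.eq_zero_of_not_pos h]
  have hcs : ∫⁻ ω, ((fun ω => (f ω : ℝ≥0∞)) * I) ω ∂P
      ≤ (∫⁻ ω, (f ω : ℝ≥0∞) ^ (2:ℝ) ∂P) ^ (1/(2:ℝ)) * (∫⁻ ω, I ω ^ (2:ℝ) ∂P) ^ (1/(2:ℝ)) :=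
    ENNReal.lintegral_mul_le_Lp_mul_Lq P Real.HolderConjugate.two_two
      ((measurable_from_top (f := fun j : ℕ => (j : ℝ≥0∞))).comp hf).aemeasurable
      (measurable_const.indicator hA).aemeasurable
  have h2 : ∀ x : ℝ≥0∞, x ^ (2:ℝ) = x * x := fun x => by
    rw [show (2:ℝ) = ((2:ℕ):ℝ) by norm_num, ENNReal.rpow_natCast, sq]
  have hI2 : ∀ ω, I ω ^ (2:ℝ) = I ω := fun ω => by
    rw [h2]
    by_cases h : 0 < f ω <;> simp [hI, Set.indicator_apply, Set.mem_setOf_eq, h]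
  have hImean : ∫⁻ ω, I ω ∂P = P {ω | 0 < f ω} := by
    rw [hI]; exact lintegral_indicator_one (μ := P) hA
  have hfI : ∫⁻ ω, ((fun ω => (f ω : ℝ≥0∞)) * I) ω ∂P = ∫⁻ ω, (f ω : ℝ≥0∞) ∂P :=
    lintegral_congr fun ω => (hrep ω).symm
  rw [hfI] at hcs
  simp_rw [hI2, hImean, h2] at hcs
  have hsq : ∀ x : ℝ≥0∞, x ^ (1/(2:ℝ)) * x ^ (1/(2:ℝ)) = x := fun x => by
    rw [← ENNReal.rpow_add_of_nonneg _ _ (by norm_num) (by norm_num)]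
    norm_num
  calc (∫⁻ ω, (f ω : ℝ≥0∞) ∂P) * (∫⁻ ω, (f ω : ℝ≥0∞) ∂P)
      ≤ ((∫⁻ ω, (f ω : ℝ≥0∞) * (f ω : ℝ≥0∞) ∂P) ^ (1/(2:ℝ)) * (P {ω | 0 < f ω}) ^ (1/(2:ℝ)))
        * ((∫⁻ ω, (f ω : ℝ≥0∞) * (f ω : ℝ≥0∞) ∂P) ^ (1/(2:ℝ))
          * (P {ω | 0 < f ω}) ^ (1/(2:ℝ))) := mul_le_mul' hcs hcs
    _ = ((∫⁻ ω, (f ω : ℝ≥0∞) * (f ω : ℝ≥0∞) ∂P) ^ (1/(2:ℝ))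
          * (∫⁻ ω, (f ω : ℝ≥0∞) * (f ω : ℝ≥0∞) ∂P) ^ (1/(2:ℝ)))
        * ((P {ω | 0 < f ω}) ^ (1/(2:ℝ)) * (P {ω | 0 < f ω}) ^ (1/(2:ℝ))) := by ring
    _ = _ := by rw [hsq, hsq]

end PZ

section Trunc
variable {Ω : Type} [MeasurableSpace Ω] {P : Measure Ω} [IsProbabilityMeasure P]

namespace GW
variable (g : GW Ω P)

/-- truncation of the offspring distribution at level `L` -/
def trunc (L : ℕ) : GW Ω P where
  ξ := fun p => (fun j => if j ≤ L then j else 0) ∘ g.ξ p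
  meas := fun p => measurable_from_top.comp (g.meas p)
  indep := g.indep.comp (fun _ => fun j => if j ≤ L then j else 0)
    (fun _ => measurable_from_top)
  ident := fun p q => (g.ident p q).comp measurable_from_top

lemma trunc_xi_le (L : ℕ) (p : ℕ × ℕ) (ω : Ω) : (g.trunc L).ξ p ω ≤ g.ξ p ω := by
  simp only [trunc, Function.comp_apply]
  split <;> omega

lemma trunc_xi_mono {L L' : ℕ} (h : L ≤ L') (p : ℕ × ℕ) (ω : Ω) :
    (g.trunc L).ξ p ω ≤ (g.trunc L').ξ p ω := by
  simp only [trunc, Function.comp_apply]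
  split <;> split <;> omega

lemma trunc_Y_le (L : ℕ) (n : ℕ) (ω : Ω) : (g.trunc L).Y n ω ≤ g.Y n ω := by
  induction n with
  | zero => exact le_refl 1
  | succ n ih =>
    show ∑ k ∈ Finset.range ((g.trunc L).Y n ω), (g.trunc L).ξ (k, n) ω
        ≤ ∑ k ∈ Finset.range (g.Y n ω), g.ξ (k, n) ω
    calc ∑ k ∈ Finset.range ((g.trunc L).Y n ω), (g.trunc L).ξ (k, n) ω
        ≤ ∑ k ∈ Finset.range ((g.trunc L).Y n ω), g.ξ (k, n) ω :=
          Finset.sum_le_sum fun k _ => g.trunc_xi_le L (k, n) ω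
      _ ≤ ∑ k ∈ Finset.range (g.Y n ω), g.ξ (k, n) ω :=
          Finset.sum_le_sum_of_subset (Finset.range_subset_range.2 ih)

lemma trunc_mu_le (L : ℕ) : (g.trunc L).mu ≤ g.mu :=
  lintegral_mono fun ω => Nat.cast_le.2 (g.trunc_xi_le L (0, 0) ω)

lemma trunc_mu_mono : Monotone (fun L => (g.trunc L).mu) := fun L L' h =>
  lintegral_mono fun ω => Nat.cast_le.2 (g.trunc_xi_mono h (0, 0) ω)

lemma trunc_mu_iSup : ⨆ L, (g.trunc L).mu = g.mu := by
  have hpt : ∀ ω, (⨆ L, ((g.trunc L).ξ (0, 0) ω : ℝ≥0∞)) = (g.ξ (0, 0) ω : ℝ≥0∞) := by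
    intro ω
    refine le_antisymm (iSup_le fun L => Nat.cast_le.2 (g.trunc_xi_le L (0, 0) ω)) ?_
    refine le_trans (le_of_eq ?_)
      (le_iSup (fun L => ((g.trunc L).ξ (0, 0) ω : ℝ≥0∞)) (g.ξ (0, 0) ω))
    congr 1
    simp [trunc]
  calc (⨆ L, (g.trunc L).mu)
      = ∫⁻ ω, ⨆ L, ((g.trunc L).ξ (0, 0) ω : ℝ≥0∞) ∂P := by
        exact (lintegral_iSup (f := fun L ω => (((g.trunc L).ξ (0, 0) ω : ℕ) : ℝ≥0∞))
          (fun L => (measurable_from_top (f := fun j : ℕ => (j : ℝ≥0∞))).comp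
            ((g.trunc L).meas (0, 0)))
          (fun L L' h ω => Nat.cast_le.2 (g.trunc_xi_mono h (0, 0) ω))).symm
    _ = g.mu := lintegral_congr hpt

lemma trunc_mu_tendsto : Tendsto (fun L => (g.trunc L).mu) atTop (𝓝 g.mu) := by
  rw [← g.trunc_mu_iSup]
  exact tendsto_atTop_iSup g.trunc_mu_mono

lemma trunc_beta_ne_top (L : ℕ) : (g.trunc L).beta ≠ ⊤ := by
  refine ne_top_of_le_ne_top (b := (L : ℝ≥0∞) * L) (by finiteness) ?_
  calc (g.trunc L).beta ≤ ∫⁻ _, (L : ℝ≥0∞) * L ∂P := by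
        refine lintegral_mono fun ω => ?_
        have h : (g.trunc L).ξ (0, 0) ω ≤ L := by
          simp only [trunc, Function.comp_apply]; split <;> omega
        exact mul_le_mul' (Nat.cast_le.2 h) (Nat.cast_le.2 h)
    _ = (L : ℝ≥0∞) * L := by simp [lintegral_const]

lemma mu_le_beta : g.mu ≤ g.beta := by
  have key : ∀ j : ℕ, (j : ℝ≥0∞) ≤ (j : ℝ≥0∞) * j := by
    intro j
    rcases Nat.eq_zero_or_pos j with h | h
    · subst h; simp
    · nth_rewrite 1 [← one_mul (j : ℝ≥0∞)]
      exact mul_le_mul_left (by exact_mod_cast h) _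
  exact lintegral_mono fun ω => key _

/-- the key lower bound coming from Paley–Zygmund and the second moment estimate -/
lemma trunc_lower (L n : ℕ) (hmu1 : g.mu ≤ 1) :
    (g.trunc L).mu ^ (n+1) / (1 + (g.trunc L).beta * n) ≤ P {ω | 0 < g.Y n ω} := by
  set h := g.trunc L
  set ν := h.mu with hν
  set β := h.beta with hβ
  have hν1 : ν ≤ 1 := le_trans (g.trunc_mu_le L) hmu1
  have hνtop : ν ≠ ⊤ := ne_top_of_le_ne_top ENNReal.one_ne_top hν1
  by_cases hν0 : ν = 0
  · rw [hν0]
    simp [zero_pow (Nat.succ_ne_zero n)]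
  -- monotonicity of measures
  have hmono : P {ω | 0 < h.Y n ω} ≤ P {ω | 0 < g.Y n ω} :=
    measure_mono fun ω hω => lt_of_lt_of_le hω (g.trunc_Y_le L n ω)
  set p := P {ω | 0 < h.Y n ω} with hp
  -- Paley–Zygmund
  have hPZ : ν ^ n * ν ^ n ≤ (∫⁻ ω, (h.Y n ω : ℝ≥0∞) * (h.Y n ω : ℝ≥0∞) ∂P) * p := by
    rw [← h.lint_Y n]
    exact paley_zygmund (h.Y n) (h.Y_meas n)
  have hsq := h.lint_Y_sq_le hν1 n
  have hc : 1 + β * n ≠ 0 := by simp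
  have hctop : 1 + β * n ≠ ⊤ := by
    refine ENNReal.add_ne_top.2 ⟨ENNReal.one_ne_top, ENNReal.mul_ne_top (g.trunc_beta_ne_top L) ?_⟩
    exact ENNReal.natCast_ne_top n
  have key : ν ^ n * ν ^ (n+1) ≤ ν ^ n * ((1 + β * n) * p) := by
    calc ν ^ n * ν ^ (n+1) = ν * (ν ^ n * ν ^ n) := by ring
      _ ≤ ν * ((∫⁻ ω, (h.Y n ω : ℝ≥0∞) * (h.Y n ω : ℝ≥0∞) ∂P) * p) := mul_le_mul_right hPZ _
      _ = (ν * ∫⁻ ω, (h.Y n ω : ℝ≥0∞) * (h.Y n ω : ℝ≥0∞) ∂P) * p := by ring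
      _ ≤ (ν ^ (2*n+1) + β * n * ν ^ n) * p := mul_le_mul_left hsq _
      _ = (ν ^ n * (ν ^ (n+1) + β * n)) * p := by ring
      _ ≤ (ν ^ n * (1 + β * n)) * p := by
          refine mul_le_mul_left (mul_le_mul_right (add_le_add_left ?_ _) _) _
          exact pow_le_one' hν1 (n+1)
      _ = ν ^ n * ((1 + β * n) * p) := by ring
  have hcancel : ν ^ (n+1) ≤ (1 + β * n) * p :=
    (ENNReal.mul_le_mul_iff_right (pow_ne_zero n hν0) (ENNReal.pow_ne_top hνtop)).1 key
  have : ν ^ (n+1) / (1 + β * n) ≤ p := by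
    rw [ENNReal.div_le_iff_le_mul (Or.inl hc) (Or.inl hctop), mul_comm]
    exact hcancel
  exact le_trans this hmono

/-- upper (Markov) bound -/
lemma upper (n : ℕ) : P {ω | 0 < g.Y n ω} ≤ g.mu ^ n := by
  rw [← g.lint_Y n]
  have hA : MeasurableSet {ω | 0 < g.Y n ω} :=
    (g.Y_meas n) (show MeasurableSet {j | 0 < j} from trivial)
  have hPA : ∫⁻ ω, {ω | 0 < g.Y n ω}.indicator (fun _ => (1:ℝ≥0∞)) ω ∂P = P {ω | 0 < g.Y n ω} := by
    exact lintegral_indicator_one (μ := P) hA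
  calc P {ω | 0 < g.Y n ω} = ∫⁻ ω, {ω | 0 < g.Y n ω}.indicator (fun _ => (1:ℝ≥0∞)) ω ∂P :=
      hPA.symm
    _ ≤ ∫⁻ ω, (g.Y n ω : ℝ≥0∞) ∂P := by
      refine lintegral_mono fun ω => ?_
      by_cases hω : 0 < g.Y n ω
      · simpa [Set.indicator_apply, Set.mem_setOf_eq, hω] using (Nat.one_le_cast (α := ℝ≥0∞)).2 hω
      · simp [Set.indicator_apply, Set.mem_setOf_eq, hω]

end GW
end Trunc

/-- For a subcritical Galton–Watson process with mean `m ∈ (0,1)`,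
`(1/n) log P(Y_n > 0) → log m`. -/
theorem subcritical_GW_survival_rate
    {Ω : Type} [MeasurableSpace Ω] {P : Measure Ω} [IsProbabilityMeasure P]
    (g : GW Ω P) {m : ℝ}
    (hint : Integrable (fun ω => (g.ξ (0, 0) ω : ℝ)) P)
    (hm : ∫ ω, (g.ξ (0, 0) ω : ℝ) ∂P = m) (h0 : 0 < m) (h1 : m < 1) :
    Tendsto (fun n : ℕ => (n : ℝ)⁻¹ * Real.log (P {ω | 0 < g.Y n ω}).toReal)
      atTop (𝓝 (Real.log m)) := by
  have hmu : g.mu = ENNReal.ofReal m := by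
    have h1' : ENNReal.ofReal (∫ ω, (g.ξ (0, 0) ω : ℝ) ∂P)
        = ∫⁻ ω, ENNReal.ofReal ((g.ξ (0, 0) ω : ℝ)) ∂P :=
      MeasureTheory.ofReal_integral_eq_lintegral_ofReal hint
        (Filter.Eventually.of_forall fun ω => Nat.cast_nonneg _)
    rw [GW.mu, ← hm, h1']
    exact lintegral_congr fun ω => (ENNReal.ofReal_natCast _).symm
  have hmu_top : g.mu ≠ ⊤ := by rw [hmu]; exact ENNReal.ofReal_ne_top
  have hmu1 : g.mu ≤ 1 := by rw [hmu]; exact ENNReal.ofReal_le_one.2 h1.le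
  have hmur : g.mu.toReal = m := by rw [hmu, ENNReal.toReal_ofReal h0.le]
  set q : ℕ → ℝ≥0∞ := fun n => P {ω | 0 < g.Y n ω} with hq
  have hq_top : ∀ n, q n ≠ ⊤ := fun n => measure_ne_top P _
  have hqu : ∀ n, (q n).toReal ≤ m ^ n := by
    intro n
    calc (q n).toReal ≤ (g.mu ^ n).toReal :=
        ENNReal.toReal_mono (ENNReal.pow_ne_top hmu_top) (g.upper n)
      _ = m ^ n := by rw [ENNReal.toReal_pow, hmur]
  have hν_tendsto : Tendsto (fun L => ((g.trunc L).mu).toReal) atTop (𝓝 m) := by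
    have := (ENNReal.tendsto_toReal hmu_top).comp g.trunc_mu_tendsto
    rwa [hmur] at this
  have hlow : ∀ L n, ((g.trunc L).mu).toReal ^ (n+1) / (1 + ((g.trunc L).beta).toReal * n)
      ≤ (q n).toReal := by
    intro L n
    have hb := g.trunc_lower L n hmu1
    have hβtop := g.trunc_beta_ne_top L
    have := ENNReal.toReal_mono (hq_top n) hb
    rw [ENNReal.toReal_div, ENNReal.toReal_pow,
      ENNReal.toReal_add ENNReal.one_ne_top
        (ENNReal.mul_ne_top hβtop (ENNReal.natCast_ne_top n)),
      ENNReal.toReal_mul] at this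
    simpa using this
  rw [tendsto_order]
  constructor
  · -- the lower estimate
    intro a ha
    have hlogν : Tendsto (fun L => Real.log (((g.trunc L).mu).toReal)) atTop
        (𝓝 (Real.log m)) := ((Real.continuousAt_log h0.ne').tendsto).comp hν_tendsto
    obtain ⟨L, hL1, hL2⟩ := ((hν_tendsto.eventually (eventually_gt_nhds h0)).and
      (hlogν.eventually (eventually_gt_nhds ha))).exists
    set νr := ((g.trunc L).mu).toReal with hνr
    set br := ((g.trunc L).beta).toReal with hbr
    have hbrpos : 0 < br := lt_of_lt_of_le hL1
      (ENNReal.toReal_mono (g.trunc_beta_ne_top L) (GW.mu_le_beta (g.trunc L)))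
    have hlowpos : ∀ n : ℕ, 0 < νr ^ (n+1) / (1 + br * n) := fun n =>
      div_pos (pow_pos hL1 _) (by positivity)
    set u : ℕ → ℝ := fun n => 1 + br * n with hu
    have hupos : ∀ n : ℕ, 0 < u n := fun n => by positivity
    set l : ℕ → ℝ := fun n => (n : ℝ)⁻¹ * ((n+1) * Real.log νr - Real.log (u n)) with hl
    have hl_tendsto : Tendsto l atTop (𝓝 (Real.log νr)) := by
      have hT1 : Tendsto (fun n : ℕ => (1 + (n:ℝ)⁻¹) * Real.log νr) atTop
          (𝓝 (Real.log νr)) := by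
        have h' : Tendsto (fun n : ℕ => 1 + (n:ℝ)⁻¹) atTop (𝓝 1) := by
          simpa using (tendsto_const_nhds (x := (1:ℝ))).add tendsto_inv_atTop_nhds_zero_nat
        simpa using h'.mul_const (Real.log νr)
      have huinf : Tendsto u atTop atTop :=
        tendsto_atTop_add_const_left _ 1
          (Tendsto.const_mul_atTop hbrpos tendsto_natCast_atTop_atTop)
      have hT2a : Tendsto (fun n : ℕ => Real.log (u n) / u n) atTop (𝓝 0) :=
        (Real.isLittleO_log_id_atTop.tendsto_div_nhds_zero).comp huinf
      have hT2b : Tendsto (fun n : ℕ => u n / (n : ℝ)) atTop (𝓝 br) := by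
        have h1' : Tendsto (fun n : ℕ => (n:ℝ)⁻¹ + br) atTop (𝓝 br) := by
          simpa using tendsto_inv_atTop_nhds_zero_nat.add
            (tendsto_const_nhds (x := br) (f := atTop))
        refine h1'.congr' ?_
        filter_upwards [eventually_ge_atTop 1] with n hn
        have hn0 : (n:ℝ) ≠ 0 := Nat.cast_ne_zero.2 (by omega)
        field_simp [hu]
        simp only [hu]; ring
      have hT2 : Tendsto (fun n : ℕ => (n:ℝ)⁻¹ * Real.log (u n)) atTop (𝓝 0) := by
        have h2 := hT2a.mul hT2b
        rw [zero_mul] at h2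
        refine h2.congr' ?_
        filter_upwards [eventually_ge_atTop 1] with n hn
        have hn0 : (n:ℝ) ≠ 0 := Nat.cast_ne_zero.2 (by omega)
        have hu0 : u n ≠ 0 := (hupos n).ne'
        field_simp
      have h3 := hT1.sub hT2
      rw [sub_zero] at h3
      refine h3.congr' ?_
      filter_upwards [eventually_ge_atTop 1] with n hn
      have hn0 : (n:ℝ) ≠ 0 := Nat.cast_ne_zero.2 (by omega)
      simp only [hl]
      field_simp
    filter_upwards [hl_tendsto.eventually (eventually_gt_nhds hL2), eventually_ge_atTop 1]
      with n hln hn1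
    refine lt_of_lt_of_le hln ?_
    have hlog : Real.log (νr ^ (n+1) / u n) = (n+1) * Real.log νr - Real.log (u n) := by
      rw [Real.log_div (pow_pos hL1 _).ne' (hupos n).ne', Real.log_pow]
      push_cast
      ring
    have hql : Real.log (νr ^ (n+1) / u n) ≤ Real.log (q n).toReal :=
      Real.log_le_log (hlowpos n) (hlow L n)
    rw [hlog] at hql
    exact mul_le_mul_of_nonneg_left hql (by positivity)
  · -- the upper estimate
    intro a ha
    obtain ⟨L0, hL0⟩ := (hν_tendsto.eventually (eventually_gt_nhds h0)).exists
    have hqpos : ∀ n, 0 < (q n).toReal := by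
      intro n
      have hb0 : (0:ℝ) ≤ ((g.trunc L0).beta).toReal := ENNReal.toReal_nonneg
      have h1' : (0:ℝ) < ((g.trunc L0).mu).toReal ^ (n+1)
          / (1 + ((g.trunc L0).beta).toReal * n) :=
        div_pos (pow_pos hL0 _) (by positivity)
      exact lt_of_lt_of_le h1' (hlow L0 n)
    filter_upwards [eventually_ge_atTop 1] with n hn1
    have hn0 : (0:ℝ) < (n:ℝ) := by exact_mod_cast (by omega : 0 < n)
    have h2 : Real.log (q n).toReal ≤ (n:ℝ) * Real.log m := by
      calc Real.log (q n).toReal ≤ Real.log (m ^ n) := Real.log_le_log (hqpos n) (hqu n)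
        _ = (n:ℝ) * Real.log m := by rw [Real.log_pow]
    calc (n:ℝ)⁻¹ * Real.log (q n).toReal ≤ (n:ℝ)⁻¹ * ((n:ℝ) * Real.log m) :=
        mul_le_mul_of_nonneg_left h2 (by positivity)
      _ = Real.log m := by field_simp
      _ < a := ha
end
end

section
/- Assume θ > 0 with ψ(θ) < ∞ and θψ'(θ) > ψ(θ), plus the L log L condition E(Σ_{|u|=1} e^{θV(u)} log₊ Σ_{|u|=1} e^{θV(u)}) < ∞. Fix ε ∈ (0, (1/2)(ψ'(θ) − ψ(θ)/θ)). Define A_{n,ε} := { max_{ℓ≥n} ( max_{k≥1} M^{(k,ℓ)} − S_ℓ )/ℓ < −ε }, where M^{(k,ℓ)} = b_ℓ(k) + max_{|u|=ℓ−1} V^{(k,ℓ)}(u). Then P(A_{n,ε}^c) → 0 as n → ∞. -/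
open MeasureTheory ProbabilityTheory Filter Set
open scoped ENNReal NNReal Topology Classical

noncomputable section

open MeasureTheory ProbabilityTheory Filter Set
open scoped ENNReal NNReal Topology Classical

noncomputable section

abbrev Label := List ℕ

/-- exponential `EReal → ℝ≥0∞` with `exp ⊥ = 0`, `exp ⊤ = ∞`. -/
def eexp (x : EReal) : ℝ≥0∞ :=
  if x = ⊥ then 0 else if x = ⊤ then ⊤ else ENNReal.ofReal (Real.exp x.toReal)

/-- logarithm `ℝ≥0∞ → EReal`. -/
def elog (y : ℝ≥0∞) : EReal :=
  if y = 0 then ⊥ else if y = ⊤ then ⊤ else ((Real.log y.toReal : ℝ) : EReal)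

/-- number of atoms of an extended-real position lying in a real set. -/
def cnt (A : Set ℝ) (x : EReal) : ℝ≥0∞ :=
  Set.indicator (Real.toEReal '' A) (fun _ => (1 : ℝ≥0∞)) x

/-- evaluation of a nonnegative test function at an extended position (dead particles ignored). -/
def evalTest (φ : ℝ → ℝ) (x : EReal) : ℝ≥0∞ :=
  if x = ⊥ ∨ x = ⊤ then 0 else ENNReal.ofReal (φ x.toReal)

/-- `e^{-x}` for `x : ℝ≥0∞`. -/
def nexp (x : ℝ≥0∞) : ℝ≥0∞ :=
  if x = ⊤ then 0 else ENNReal.ofReal (Real.exp (-x.toReal))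

/-- `log₊` on `ℝ≥0∞`. -/
def plog (x : ℝ≥0∞) : ℝ≥0∞ :=
  if x = ⊤ then ⊤ else ENNReal.ofReal (Real.log (max x.toReal 1))

variable {Ω : Type} [MeasurableSpace Ω]

/-- A branching random walk: i.i.d. displacement point processes indexed by Ulam–Harris labels
(the label of a particle is the list of child indices along its ancestral line, most recent
first); `disp u ω i` is the displacement of the `i`-th child of particle `u`, equal to `⊥`
if this child does not exist. -/
structure BRW (Ω : Type) [MeasurableSpace Ω] (P : Measure Ω) where
  disp : Label → Ω → ℕ → EReal
  meas : ∀ u, Measurable (disp u)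
  indep : iIndepFun disp P
  ident : ∀ u v, IdentDistrib (disp u) (disp v) P P

namespace BRW

variable {P : Measure Ω}

/-- position `V(u)` of the particle with label `u` (`⊥` if it is dead). -/
def V (b : BRW Ω P) : Label → Ω → EReal
  | [], _ => 0
  | i :: u, ω => b.V u ω + b.disp u ω i

/-- maximal displacement at generation `n`. -/
def M (b : BRW Ω P) (n : ℕ) (ω : Ω) : EReal :=
  ⨆ u : {u : Label // u.length = n}, b.V u ω

/-- `E (Σ_{|u|=1} e^{θ V(u)})`. -/
def Lap (b : BRW Ω P) (θ : ℝ) : ℝ≥0∞ :=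
  ∫⁻ ω, ∑' i : ℕ, (if b.V [i] ω = ⊥ then 0 else eexp ((θ : EReal) * b.V [i] ω)) ∂P

/-- the log-Laplace transform `ψ(θ)`. -/
def ψe (b : BRW Ω P) (θ : ℝ) : EReal := elog (b.Lap θ)

/-- the Legendre transform `ψ*(x) = sup_{θ ≥ 0} (θ x − ψ(θ))`. -/
def ψStar (b : BRW Ω P) (x : ℝ) : EReal :=
  ⨆ θ : {θ : ℝ // 0 ≤ θ}, ((θ.1 * x : ℝ) : EReal) - b.ψe θ.1

/-- `x* = inf_{θ>0} ψ(θ)/θ`. -/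
def xstar (b : BRW Ω P) : EReal :=
  ⨅ θ : {θ : ℝ // 0 < θ}, b.ψe θ.1 * ((θ.1⁻¹ : ℝ) : EReal)

/-- number of particles alive at generation `n`, i.e. `Z_n(ℝ)`. -/
def ZR (b : BRW Ω P) (n : ℕ) (ω : Ω) : ℝ≥0∞ :=
  ∑' u : {u : Label // u.length = n}, if b.V u ω = ⊥ then 0 else 1

/-- number of particles at generation `n` located in `A`, i.e. `Z_n(A)`. -/
def Zset (b : BRW Ω P) (n : ℕ) (A : Set ℝ) (ω : Ω) : ℝ≥0∞ :=
  ∑' u : {u : Label // u.length = n}, cnt A (b.V u ω)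

/-- mass of the extremal process `ℰ_n = Σ_{|u|=n} δ_{V(u)−M_n}` on a set `A`. -/
def Emeas (b : BRW Ω P) (n : ℕ) (ω : Ω) (A : Set ℝ) : ℝ≥0∞ :=
  ∑' u : {u : Label // u.length = n}, cnt A (b.V u ω - b.M n ω)

/-- `ℰ_n(φ) = Σ_{|u|=n} φ(V(u)−M_n)`. -/
def Etest (b : BRW Ω P) (n : ℕ) (φ : ℝ → ℝ) (ω : Ω) : ℝ≥0∞ :=
  ∑' u : {u : Label // u.length = n}, evalTest φ (b.V u ω - b.M n ω)

/-- `W_1^θ = Σ_{|u|=1} e^{θ V(u)}`. -/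
def W1 (b : BRW Ω P) (θ : ℝ) (ω : Ω) : ℝ≥0∞ :=
  ∑' i : ℕ, (if b.V [i] ω = ⊥ then 0 else eexp ((θ : EReal) * b.V [i] ω))

/-- the `L log L` integrability condition (as3). -/
def LlogL (b : BRW Ω P) (θ : ℝ) : Prop :=
  ∫⁻ ω, b.W1 θ ω * plog (b.W1 θ ω) ∂P < ⊤

/-- the branching random walk is non-lattice (as4). -/
def NonLattice (b : BRW Ω P) : Prop :=
  ∀ c d : ℝ,
    P {ω | ∀ i : ℕ, b.V [i] ω ≠ ⊥ → ∃ k : ℤ, b.V [i] ω = ((c + d * k : ℝ) : EReal)} < 1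

/-- `σ² = E (Σ_{|u|=1} (V(u) − ψ'(θ))² e^{θV(u)})` (as2). -/
def VarCond (b : BRW Ω P) (θ ψ' σ2 : ℝ) : Prop :=
  (∫⁻ ω, ∑' i : ℕ, (if b.V [i] ω = ⊥ then 0 else
      ENNReal.ofReal (((b.V [i] ω).toReal - ψ') ^ 2) * eexp ((θ : EReal) * b.V [i] ω)) ∂P)
    = ENNReal.ofReal σ2

end BRW


/-- index type for the independent ingredients of the spine construction. -/
def SpIdx : Type := ℕ ⊕ (ℕ × ℕ)

def SpType : SpIdx → Type :=
  Sum.elim (fun _ => (ℕ → EReal) × ℕ) (fun _ => Label → EReal)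

instance : ∀ i : SpIdx, MeasurableSpace (SpType i) := fun i => by
  cases i with
  | inl k => exact (inferInstance : MeasurableSpace ((ℕ → EReal) × ℕ))
  | inr p => exact (inferInstance : MeasurableSpace (Label → EReal))

/-- The time-reversed spine construction for a branching random walk:
`B k · i = b_{k+1}(i)` is the displacement point process of the children of the spine at
time `k+1`, `W k = w^{(k+1)}` the spine index, `Vc i k = V^{(i,k+1)}` independent copies of
the branching random walk; `(B k, W k)` has the size-biased law with spine choice, all the
ingredients are independent, and the spine step has mean `ψ' = ψ'(θ)` with
`ψ = ψ(θ) < ∞`. -/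
structure SpineSetup (Ω : Type) [MeasurableSpace Ω] (P : Measure Ω) (θ ψ ψ' : ℝ)
    extends BRW Ω P where
  B : ℕ → Ω → ℕ → EReal
  W : ℕ → Ω → ℕ
  Vc : ℕ → ℕ → Label → Ω → EReal
  lapEq : toBRW.Lap θ = ENNReal.ofReal (Real.exp ψ)
  sbLaw : ∀ k : ℕ, ∀ f : (ℕ → EReal) × ℕ → ℝ≥0∞, Measurable f →
    ∫⁻ ω, f (B k ω, W k ω) ∂P
      = ∫⁻ ω, ∑' i : ℕ, (if toBRW.V [i] ω = ⊥ then 0 else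
          eexp ((θ : EReal) * toBRW.V [i] ω - (ψ : EReal)) *
            f (fun j => toBRW.V [j] ω, i)) ∂P
  copyLaw : ∀ i k : ℕ, ∀ f : (Label → EReal) → ℝ≥0∞, Measurable f →
    ∫⁻ ω, f (fun u => Vc i k u ω) ∂P = ∫⁻ ω, f (fun u => toBRW.V u ω) ∂P
  indepAll : iIndepFun (m := fun i : SpIdx => inferInstance)
    (fun i => Sum.rec (motive := fun i => Ω → SpType i)
      (fun k ω => (B k ω, W k ω)) (fun p ω u => Vc p.1 p.2 u ω) i) P
  stepInt : Integrable (fun ω => (B 0 ω (W 0 ω)).toReal) P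
  stepMean : ∫ ω, (B 0 ω (W 0 ω)).toReal ∂P = ψ'

namespace SpineSetup

variable {P : Measure Ω} {θ ψ ψ' : ℝ}

/-- the spine random walk `S_n = Σ_{k=1}^n b_k(w^{(k)})`. -/
def S (s : SpineSetup Ω P θ ψ ψ') (n : ℕ) (ω : Ω) : ℝ :=
  ∑ k ∈ Finset.range n, (s.B k ω (s.W k ω)).toReal

/-- the atom `b_{k+1}(i) + V^{(i,k+1)}(u) − S_{k+1}` of the decoration measure. -/
def atom (s : SpineSetup Ω P θ ψ ψ') (k i : ℕ) (u : Label) (ω : Ω) : EReal :=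
  s.B k ω i + s.Vc i k u ω - ((s.S (k + 1) ω : ℝ) : EReal)

/-- mass of `D_n^θ` on a set `A ⊆ ℝ`. -/
def Dn (s : SpineSetup Ω P θ ψ ψ') (n : ℕ) (ω : Ω) (A : Set ℝ) : ℝ≥0∞ :=
  cnt A 0 + ∑ k ∈ Finset.range n, ∑' i : ℕ, ∑' u : {u : Label // u.length = k},
    if i = s.W k ω then 0 else cnt A (s.atom k i u ω)

/-- mass of `D_∞^θ` on a set `A ⊆ ℝ`. -/
def Dinf (s : SpineSetup Ω P θ ψ ψ') (ω : Ω) (A : Set ℝ) : ℝ≥0∞ :=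
  cnt A 0 + ∑' k : ℕ, ∑' i : ℕ, ∑' u : {u : Label // u.length = k},
    if i = s.W k ω then 0 else cnt A (s.atom k i u ω)

/-- `D_n^θ(φ)` for a nonnegative test function `φ`. -/
def Dtest (s : SpineSetup Ω P θ ψ ψ') (n : ℕ) (φ : ℝ → ℝ) (ω : Ω) : ℝ≥0∞ :=
  ENNReal.ofReal (φ 0) + ∑ k ∈ Finset.range n, ∑' i : ℕ, ∑' u : {u : Label // u.length = k},
    if i = s.W k ω then 0 else evalTest φ (s.atom k i u ω)

/-- `D_∞^θ(φ)` for a nonnegative test function `φ`. -/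
def DtestInf (s : SpineSetup Ω P θ ψ ψ') (φ : ℝ → ℝ) (ω : Ω) : ℝ≥0∞ :=
  ENNReal.ofReal (φ 0) + ∑' k : ℕ, ∑' i : ℕ, ∑' u : {u : Label // u.length = k},
    if i = s.W k ω then 0 else evalTest φ (s.atom k i u ω)

/-- `C(θ) = E ( (1/D_∞^θ({0})) 1_{D_∞^θ((0,∞)) = 0} )`. -/
def Cmass (s : SpineSetup Ω P θ ψ ψ') : ℝ≥0∞ :=
  ∫⁻ ω, (if s.Dinf ω (Set.Ioi 0) = 0 then (s.Dinf ω {0})⁻¹ else 0) ∂P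

/-- the event `A_{n+1,ε}` of Lemma 2.3. -/
def Aev (s : SpineSetup Ω P θ ψ ψ') (n : ℕ) (ε : ℝ) : Set Ω :=
  {ω | ∀ ℓ, n ≤ ℓ →
    (⨆ k : ℕ, (s.B ℓ ω k + ⨆ u : {u : Label // u.length = ℓ}, s.Vc k ℓ u ω))
      - ((s.S (ℓ + 1) ω : ℝ) : EReal) < ((-ε * (ℓ + 1) : ℝ) : EReal)}

end SpineSetup



namespace SpineAux

variable {α : Type*} [MeasurableSpace α] {μ : Measure α}

lemma lintegral_indicator_one_le' (μ : Measure α) (s : Set α) :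
    ∫⁻ a, s.indicator (fun _ => (1 : ℝ≥0∞)) a ∂μ ≤ μ s := by
  have h1 : ∀ a, s.indicator (fun _ => (1:ℝ≥0∞)) a
      ≤ (toMeasurable μ s).indicator (fun _ => (1:ℝ≥0∞)) a := fun a =>
    Set.indicator_le_indicator_of_subset (subset_toMeasurable μ s) (fun _ => zero_le) a
  calc ∫⁻ a, s.indicator (fun _ => (1:ℝ≥0∞)) a ∂μ
      ≤ ∫⁻ a, (toMeasurable μ s).indicator (fun _ => (1:ℝ≥0∞)) a ∂μ := lintegral_mono h1
    _ = μ (toMeasurable μ s) := lintegral_indicator_one (measurableSet_toMeasurable μ s)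
    _ = μ s := measure_toMeasurable s

lemma measure_add_lintegral_compl_le (μ : Measure α) [IsProbabilityMeasure μ] (s : Set α) :
    μ s + ∫⁻ a, sᶜ.indicator (fun _ => (1 : ℝ≥0∞)) a ∂μ ≤ 1 := by
  obtain ⟨g, hgm, hgle, hg⟩ := exists_measurable_le_lintegral_eq μ (sᶜ.indicator fun _ => (1:ℝ≥0∞))
  rw [hg]
  set G := {a | 0 < g a} with hGdef
  have hGm : MeasurableSet G := measurableSet_lt measurable_const hgm
  have hGs : G ⊆ sᶜ := by
    intro a ha
    by_contra h
    have h2 := hgle a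
    rw [Set.indicator_of_notMem h] at h2
    exact absurd (le_antisymm h2 (zero_le)) (ne_of_gt ha)
  have h2 : ∫⁻ a, g a ∂μ ≤ μ G := by
    refine le_trans (lintegral_mono (g := G.indicator fun _ => (1:ℝ≥0∞)) ?_) ?_
    · intro a
      by_cases ha : a ∈ G
      · rw [Set.indicator_of_mem ha]
        refine le_trans (hgle a) ?_
        by_cases hs' : a ∈ sᶜ <;> simp [hs']
      · rw [Set.indicator_of_notMem ha]
        simp only [hGdef, Set.mem_setOf_eq, not_lt, le_zero_iff] at ha
        exact le_of_eq ha
    · exact le_of_eq (lintegral_indicator_one hGm)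
  calc μ s + ∫⁻ a, g a ∂μ ≤ μ Gᶜ + μ G :=
        add_le_add (measure_mono (Set.subset_compl_comm.mp hGs)) h2
    _ = 1 := by
        rw [add_comm, measure_add_measure_compl hGm, measure_univ]

lemma nullMeasurableSet_of_indicator_sum (μ : Measure α) [IsProbabilityMeasure μ] (s : Set α)
    (h : (∫⁻ a, s.indicator (fun _ => (1:ℝ≥0∞)) a ∂μ)
        + (∫⁻ a, sᶜ.indicator (fun _ => (1:ℝ≥0∞)) a ∂μ) = 1) :
    NullMeasurableSet s μ := by
  set I := ∫⁻ a, s.indicator (fun _ => (1:ℝ≥0∞)) a ∂μ with hI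
  set J := ∫⁻ a, sᶜ.indicator (fun _ => (1:ℝ≥0∞)) a ∂μ with hJ
  have hIs : I ≤ μ s := lintegral_indicator_one_le' μ s
  have hJs : J ≤ μ sᶜ := lintegral_indicator_one_le' μ sᶜ
  have hJne : J ≠ ⊤ := by
    intro hc; rw [hc] at h; simp at h
  have hIne : I ≠ ⊤ := by
    intro hc; rw [hc] at h; simp at h
  have h1 : μ s + J ≤ I + J := by
    rw [h]; exact measure_add_lintegral_compl_le μ s
  have h2 : μ sᶜ + I ≤ J + I := by
    rw [add_comm J I, h]
    have := measure_add_lintegral_compl_le μ sᶜ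
    rwa [compl_compl] at this
  have hμs : μ s = I := le_antisymm (ENNReal.le_of_add_le_add_right hJne h1) hIs
  have hμsc : μ sᶜ = J := le_antisymm (ENNReal.le_of_add_le_add_right hIne h2) hJs
  -- now μ s + μ sᶜ = 1 : build null measurable
  have hsum : μ s + μ sᶜ = 1 := by rw [hμs, hμsc, h]
  set H := toMeasurable μ s with hH
  set H' := toMeasurable μ sᶜ with hH'
  have hHm : MeasurableSet H := measurableSet_toMeasurable μ s
  have hH'm : MeasurableSet H' := measurableSet_toMeasurable μ sᶜ
  have hint : μ (H ∩ H') = 0 := by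
    have hu : μ (H ∪ H') = 1 := by
      refine le_antisymm (le_trans (measure_mono (Set.subset_univ _)) (by simp)) ?_
      have : (univ : Set α) ⊆ H ∪ H' := by
        intro a _
        by_cases ha : a ∈ s
        · exact Or.inl (subset_toMeasurable μ s ha)
        · exact Or.inr (subset_toMeasurable μ sᶜ ha)
      calc (1:ℝ≥0∞) = μ univ := by simp
        _ ≤ μ (H ∪ H') := measure_mono this
    have hadd : μ (H ∪ H') + μ (H ∩ H') = μ H + μ H' :=
      measure_union_add_inter' hHm H'
    rw [hu, measure_toMeasurable, measure_toMeasurable, hsum] at hadd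
    exact (ENNReal.add_right_inj ENNReal.one_ne_top).mp (by rw [hadd, add_zero])
  have hsub : H \ s ⊆ H ∩ H' := by
    intro a ⟨haH, has⟩
    exact ⟨haH, subset_toMeasurable μ sᶜ has⟩
  refine NullMeasurableSet.congr hHm.nullMeasurableSet ?_
  rw [Filter.eventuallyEq_set]
  refine Filter.Eventually.mono (measure_eq_zero_iff_ae_notMem.mp (measure_mono_null hsub hint)) ?_
  intro a ha
  constructor
  · intro haH
    by_contra has
    exact ha ⟨haH, has⟩
  · exact fun has => subset_toMeasurable μ s has
variable {α : Type*} [MeasurableSpace α] {μ : Measure α}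

lemma exists_measurable_mod_ereal {X : α → EReal}
    (hX : ∀ E : Set EReal, MeasurableSet E → NullMeasurableSet (X ⁻¹' E) μ) :
    ∃ g : α → EReal, Measurable g ∧ g =ᵐ[μ] X := by
  set M : ℚ → Set α := fun q => toMeasurable μ (X ⁻¹' Iio ((q:ℝ):EReal)) with hM
  have hMm : ∀ q, MeasurableSet (M q) := fun q => measurableSet_toMeasurable _ _
  have hMae : ∀ q, M q =ᵐ[μ] X ⁻¹' Iio ((q:ℝ):EReal) := fun q =>
    NullMeasurableSet.toMeasurable_ae_eq (hX _ measurableSet_Iio)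
  set N0 : Set α := ⋃ q : ℚ, (M q \ X ⁻¹' Iio ((q:ℝ):EReal)) ∪ (X ⁻¹' Iio ((q:ℝ):EReal) \ M q) with hN0
  have hN0null : μ N0 = 0 := by
    refine measure_iUnion_null fun q => measure_union_null ?_ ?_
    · exact (ae_eq_set.mp (hMae q)).1
    · exact (ae_eq_set.mp (hMae q)).2
  set N : Set α := toMeasurable μ N0 with hN
  have hNm : MeasurableSet N := measurableSet_toMeasurable _ _
  have hNnull : μ N = 0 := by rw [hN, measure_toMeasurable]; exact hN0null
  refine ⟨fun a => if a ∈ N then ⊥ else X a, ?_, ?_⟩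
  · refine measurable_of_Iio fun c => ?_
    by_cases hc : (⊥:EReal) < c
    · have hset : (fun a => if a ∈ N then (⊥:EReal) else X a) ⁻¹' Iio c
          = N ∪ (Nᶜ ∩ ⋃ q : {q : ℚ // ((q:ℝ):EReal) < c}, M q.1 ∩ Nᶜ) := by
        ext a
        by_cases ha : a ∈ N
        · simp [ha, hc]
        · simp only [Set.mem_preimage, Set.mem_Iio, if_neg ha, Set.mem_union,
            Set.mem_inter_iff, Set.mem_compl_iff, Set.mem_iUnion]
          constructor
          · intro hXa
            obtain ⟨q, hq1, hq2⟩ := EReal.lt_iff_exists_rat_btwn.mp hXa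
            refine Or.inr ⟨ha, ⟨⟨q, hq2⟩, ?_, ha⟩⟩
            by_contra hmem
            exact (fun h => ha (subset_toMeasurable μ N0 h))
              (Set.mem_iUnion.mpr ⟨q, Or.inr ⟨hq1, hmem⟩⟩)
          · rintro (h | ⟨-, ⟨q', hq⟩, hmq, -⟩)
            · exact absurd h ha
            · have hXq : a ∈ X ⁻¹' Iio ((q':ℝ):EReal) := by
                by_contra hno
                exact (fun h => ha (subset_toMeasurable μ N0 h))
                  (Set.mem_iUnion.mpr ⟨q', Or.inl ⟨hmq, hno⟩⟩)
              exact lt_trans hXq hq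
      rw [hset]
      exact hNm.union (hNm.compl.inter (MeasurableSet.iUnion fun q => (hMm q.1).inter hNm.compl))
    · have hcbot : c = ⊥ := by
        rcases eq_or_lt_of_le (bot_le : (⊥:EReal) ≤ c) with h | h
        · exact h.symm
        · exact absurd h hc
      have : (fun a => if a ∈ N then (⊥:EReal) else X a) ⁻¹' Iio c = ∅ := by
        rw [hcbot]; ext a; simp
      rw [this]; exact MeasurableSet.empty
  · have hsub : {a | (if a ∈ N then (⊥:EReal) else X a) ≠ X a} ⊆ N := by
      intro a ha
      by_contra hn
      simp [hn] at ha
    exact measure_mono_null hsub hNnull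

lemma exists_measurable_mod_nat {X : α → ℕ}
    (hX : ∀ E : Set ℕ, MeasurableSet E → NullMeasurableSet (X ⁻¹' E) μ) :
    ∃ g : α → ℕ, Measurable g ∧ g =ᵐ[μ] X := by
  set M : ℕ → Set α := fun i => toMeasurable μ (X ⁻¹' {i}) with hM
  have hMm : ∀ i, MeasurableSet (M i) := fun i => measurableSet_toMeasurable _ _
  have hMae : ∀ i, M i =ᵐ[μ] X ⁻¹' {i} := fun i =>
    NullMeasurableSet.toMeasurable_ae_eq (hX _ (measurableSet_singleton i))
  set N0 : Set α := ⋃ i : ℕ, (M i \ X ⁻¹' {i}) ∪ (X ⁻¹' {i} \ M i) with hN0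
  have hN0null : μ N0 = 0 := by
    refine measure_iUnion_null fun i => measure_union_null ?_ ?_
    · exact (ae_eq_set.mp (hMae i)).1
    · exact (ae_eq_set.mp (hMae i)).2
  set N : Set α := toMeasurable μ N0 with hN
  have hNm : MeasurableSet N := measurableSet_toMeasurable _ _
  have hNnull : μ N = 0 := by rw [hN, measure_toMeasurable]; exact hN0null
  have hNsub : ∀ {a i}, a ∉ N → (X a = i ↔ a ∈ M i) := by
    intro a i ha
    constructor
    · intro hXa
      by_contra hm
      exact (fun h => ha (subset_toMeasurable μ N0 h))
        (Set.mem_iUnion.mpr ⟨i, Or.inr ⟨hXa, hm⟩⟩)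
    · intro hm
      by_contra hXa
      exact (fun h => ha (subset_toMeasurable μ N0 h))
        (Set.mem_iUnion.mpr ⟨i, Or.inl ⟨hm, hXa⟩⟩)
  refine ⟨fun a => if a ∈ N then 0 else X a, ?_, ?_⟩
  · refine measurable_to_countable' fun i => ?_
    by_cases hi : i = 0
    · have : (fun a => if a ∈ N then 0 else X a) ⁻¹' {i} = N ∪ (Nᶜ ∩ M i) := by
        ext a
        by_cases ha : a ∈ N
        · simp [ha, hi]
        · simp only [Set.mem_preimage, if_neg ha, Set.mem_singleton_iff, Set.mem_union,
            Set.mem_inter_iff, Set.mem_compl_iff]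
          rw [hNsub ha]
          tauto
      rw [this]; exact hNm.union (hNm.compl.inter (hMm i))
    · have : (fun a => if a ∈ N then 0 else X a) ⁻¹' {i} = Nᶜ ∩ M i := by
        ext a
        by_cases ha : a ∈ N
        · simp [ha, Ne.symm hi]
        · simp only [Set.mem_preimage, if_neg ha, Set.mem_singleton_iff, Set.mem_inter_iff,
            Set.mem_compl_iff]
          rw [hNsub ha]
          tauto
      rw [this]; exact hNm.compl.inter (hMm i)
  · have hsub : {a | (if a ∈ N then 0 else X a) ≠ X a} ⊆ N := by
      intro a ha
      by_contra hn
      simp [hn] at ha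
    exact measure_mono_null hsub hNnull

lemma nullMeasurable_of_dist {β : Type*} [MeasurableSpace β] (μ : Measure α)
    [IsProbabilityMeasure μ] {X : α → β} (T : (β → ℝ≥0∞) → ℝ≥0∞)
    (hT : ∀ f : β → ℝ≥0∞, Measurable f → ∫⁻ a, f (X a) ∂μ = T f)
    (hadd : ∀ E : Set β, MeasurableSet E →
      T (E.indicator fun _ => 1) + T (Eᶜ.indicator fun _ => 1) = 1) :
    ∀ E : Set β, MeasurableSet E → NullMeasurableSet (X ⁻¹' E) μ := by
  intro E hE
  apply nullMeasurableSet_of_indicator_sum μ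
  have h1 : ∀ (F : Set β), MeasurableSet F → ∫⁻ a, (X ⁻¹' F).indicator (fun _ => (1:ℝ≥0∞)) a ∂μ
      = T (F.indicator fun _ => 1) := by
    intro F hF
    rw [← hT _ ((measurable_const (a := (1:ℝ≥0∞))).indicator hF)]
    refine lintegral_congr fun a => ?_
    by_cases h : X a ∈ F <;> simp [h]
  rw [h1 E hE, ← Set.preimage_compl, h1 Eᶜ hE.compl]
  exact hadd E hE

lemma eexp_bot : eexp ⊥ = 0 := by simp [eexp]

lemma eexp_top : eexp ⊤ = ⊤ := by simp [eexp]

lemma eexp_coe (x : ℝ) : eexp (x : EReal) = ENNReal.ofReal (Real.exp x) := by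
  simp [eexp, EReal.coe_ne_bot, EReal.coe_ne_top]

lemma eexp_zero : eexp (0 : EReal) = 1 := by
  rw [show (0 : EReal) = ((0:ℝ) : EReal) by norm_cast, eexp_coe]
  simp

lemma measurable_eexp : Measurable eexp := by
  unfold eexp
  refine Measurable.ite ?_ measurable_const (Measurable.ite ?_ measurable_const ?_)
  · exact measurableSet_eq
  · exact measurableSet_eq
  · exact ENNReal.measurable_ofReal.comp (Real.measurable_exp.comp measurable_ereal_toReal)

lemma eexp_add (x y : EReal) : eexp (x + y) = eexp x * eexp y := by
  induction x using EReal.rec with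
  | bot => rw [EReal.bot_add, eexp_bot, zero_mul]
  | top =>
    induction y using EReal.rec with
    | bot => rw [EReal.add_bot, eexp_bot, eexp_top, mul_zero]
    | coe b =>
      rw [EReal.top_add_coe, eexp_top, eexp_coe]
      rw [ENNReal.top_mul (by simp [Real.exp_pos b])]
    | top => rw [EReal.top_add_top, eexp_top, ENNReal.top_mul (by simp)]
  | coe a =>
    induction y using EReal.rec with
    | bot => rw [EReal.add_bot, eexp_bot, mul_zero]
    | coe b =>
      rw [← EReal.coe_add, eexp_coe, eexp_coe, eexp_coe, Real.exp_add,
        ENNReal.ofReal_mul (Real.exp_nonneg a)]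
    | top =>
      rw [EReal.coe_add_top, eexp_top, eexp_coe]
      rw [ENNReal.mul_top (by simp [Real.exp_pos a])]

lemma eexp_mono : Monotone eexp := by
  intro x y h
  induction y using EReal.rec with
  | bot => rw [le_bot_iff.mp h]
  | top => rw [eexp_top]; exact le_top
  | coe b =>
    induction x using EReal.rec with
    | bot => rw [eexp_bot]; exact zero_le
    | top => exact absurd h (by simp)
    | coe a =>
      rw [eexp_coe, eexp_coe]
      exact ENNReal.ofReal_le_ofReal (Real.exp_le_exp.mpr (EReal.coe_le_coe_iff.mp h))

section Phi

variable {θ : ℝ} (hθ : 0 < θ)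
include hθ

lemma coe_pos_mul_add (x y : EReal) : (θ : EReal) * (x + y) = (θ:EReal) * x + (θ:EReal) * y := by
  induction x using EReal.rec with
  | bot => rw [EReal.bot_add, EReal.coe_mul_bot_of_pos hθ, EReal.bot_add]
  | top =>
    induction y using EReal.rec with
    | bot => rw [EReal.add_bot, EReal.coe_mul_bot_of_pos hθ, EReal.add_bot]
    | coe b =>
      rw [EReal.top_add_coe, EReal.coe_mul_top_of_pos hθ, ← EReal.coe_mul, EReal.top_add_coe]
    | top => rw [EReal.top_add_top, EReal.coe_mul_top_of_pos hθ, EReal.top_add_top]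
  | coe a =>
    induction y using EReal.rec with
    | bot => rw [EReal.add_bot, EReal.coe_mul_bot_of_pos hθ, ← EReal.coe_mul, EReal.add_bot]
    | coe b => rw [← EReal.coe_add, ← EReal.coe_mul, ← EReal.coe_mul, ← EReal.coe_mul,
        mul_add, EReal.coe_add]
    | top =>
      rw [EReal.coe_add_top, EReal.coe_mul_top_of_pos hθ, ← EReal.coe_mul, EReal.coe_add_top]

lemma phi_mono {x y : EReal} (h : x ≤ y) : eexp ((θ:EReal) * x) ≤ eexp ((θ:EReal) * y) :=
  eexp_mono (mul_le_mul_of_nonneg_left h (by exact_mod_cast hθ.le))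

lemma phi_eq (x : EReal) : eexp ((θ:EReal) * x)
    = if x = ⊥ then 0 else if x = ⊤ then ⊤ else ENNReal.ofReal (Real.exp (θ * x.toReal)) := by
  induction x using EReal.rec with
  | bot => simp [EReal.coe_mul_bot_of_pos hθ, eexp_bot]
  | top => simp [EReal.coe_mul_top_of_pos hθ, eexp_top]
  | coe a => simp [EReal.coe_ne_bot, EReal.coe_ne_top, ← EReal.coe_mul, eexp_coe]

lemma measurable_phi : Measurable fun x : EReal => eexp ((θ:EReal) * x) := by
  have : (fun x : EReal => eexp ((θ:EReal) * x)) = fun x =>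
      if x = ⊥ then 0 else if x = ⊤ then ⊤ else ENNReal.ofReal (Real.exp (θ * x.toReal)) := by
    funext x; exact phi_eq hθ x
  rw [this]
  refine Measurable.ite measurableSet_eq measurable_const
    (Measurable.ite measurableSet_eq measurable_const ?_)
  exact ENNReal.measurable_ofReal.comp
    (Real.measurable_exp.comp (measurable_ereal_toReal.const_mul θ))

lemma phi_iSup_le_tsum {ι : Type*} [Countable ι] [Nonempty ι] (f : ι → EReal) :
    eexp ((θ:EReal) * ⨆ i, f i) ≤ ∑' i, eexp ((θ:EReal) * f i) := by
  have key : eexp ((θ:EReal) * ⨆ i, f i) ≤ ⨆ i, eexp ((θ:EReal) * f i) := by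
    by_cases hb : (⨆ i, f i) = ⊥
    · rw [hb, EReal.coe_mul_bot_of_pos hθ, eexp_bot]; exact zero_le
    by_cases ht : (⨆ i, f i) = ⊤
    · rw [ht, EReal.coe_mul_top_of_pos hθ, eexp_top, top_le_iff]
      by_contra hne
      have h2 : ∀ M : ℝ, ENNReal.ofReal (Real.exp (θ * M)) ≤ ⨆ i, eexp ((θ:EReal) * f i) := by
        intro M
        have hMlt : ((M:ℝ) : EReal) < ⨆ i, f i := by rw [ht]; exact EReal.coe_lt_top M
        obtain ⟨i, hi⟩ := lt_iSup_iff.mp hMlt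
        refine le_trans (le_of_eq ?_) (le_trans (phi_mono hθ hi.le)
          (le_iSup (fun i => eexp ((θ:EReal) * f i)) i))
        rw [← EReal.coe_mul, eexp_coe]
      set T := ⨆ i, eexp ((θ:EReal) * f i) with hT
      have hTne : T ≠ ⊤ := hne
      have h3 := (ENNReal.ofReal_le_iff_le_toReal hTne).mp
        (h2 (Real.log (T.toReal + 1) / θ))
      rw [mul_div_cancel₀ _ (ne_of_gt hθ), Real.exp_log (by positivity)] at h3
      linarith
    · have hSa : ((⨆ i, f i).toReal : EReal) = ⨆ i, f i := EReal.coe_toReal ht hb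
      set a := (⨆ i, f i).toReal with ha
      have hseq : ∀ n : ℕ, ENNReal.ofReal (Real.exp (θ * (a - 1/(n+1))))
          ≤ ⨆ i, eexp ((θ:EReal) * f i) := by
        intro n
        have hlt : ((a - 1/(n+1) : ℝ) : EReal) < ⨆ i, f i := by
          rw [← hSa]
          exact_mod_cast sub_lt_self a (by positivity)
        obtain ⟨i, hi⟩ := lt_iSup_iff.mp hlt
        refine le_trans (le_of_eq ?_) (le_trans (phi_mono hθ hi.le)
          (le_iSup (fun i => eexp ((θ:EReal) * f i)) i))
        rw [← EReal.coe_mul, eexp_coe]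
      have hlim : Tendsto (fun n : ℕ => ENNReal.ofReal (Real.exp (θ * (a - 1/(n+1)))))
          atTop (𝓝 (ENNReal.ofReal (Real.exp (θ * a)))) := by
        refine (ENNReal.continuous_ofReal.tendsto _).comp ?_
        refine (Real.continuous_exp.tendsto _).comp ?_
        have h0 : Tendsto (fun n : ℕ => a - 1/(n+1:ℝ)) atTop (𝓝 a) := by
          have h1 := tendsto_one_div_add_atTop_nhds_zero_nat (𝕜 := ℝ)
          have h' := (tendsto_const_nhds (x := a) (f := (atTop : Filter ℕ))).sub h1
          simpa using h'
        exact h0.const_mul θ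
      have hfin : ENNReal.ofReal (Real.exp (θ * a)) ≤ ⨆ i, eexp ((θ:EReal) * f i) :=
        le_of_tendsto hlim (Filter.Eventually.of_forall hseq)
      rw [← hSa, ← EReal.coe_mul, eexp_coe]
      exact hfin
  refine le_trans key (iSup_le fun i => ENNReal.le_tsum i)

end Phi

end SpineAux


namespace SpineAux

lemma _root_.Measurable.ereal_add' {α : Type*} [MeasurableSpace α] {f g : α → EReal}
    (hf : Measurable f) (hg : Measurable g) : Measurable fun a => f a + g a := by
  have hrep : ∀ x y : EReal, x + y = if x = ⊥ ∨ y = ⊥ then ⊥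
      else if x = ⊤ ∨ y = ⊤ then ⊤ else ((x.toReal + y.toReal : ℝ) : EReal) := by
    intro x y
    induction x using EReal.rec with
    | bot => simp [EReal.bot_add]
    | top =>
      induction y using EReal.rec with
      | bot => simp [EReal.add_bot]
      | coe b => simp [EReal.top_add_coe, EReal.coe_ne_bot]
      | top => simp [EReal.top_add_top]
    | coe a =>
      induction y using EReal.rec with
      | bot => simp [EReal.add_bot]
      | coe b => simp [EReal.coe_ne_bot, EReal.coe_ne_top, ← EReal.coe_add]
      | top => simp [EReal.coe_add_top, EReal.coe_ne_bot, EReal.coe_ne_top]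
  have heq : (fun a => f a + g a) = fun a => if f a = ⊥ ∨ g a = ⊥ then ⊥
      else if f a = ⊤ ∨ g a = ⊤ then ⊤ else (((f a).toReal + (g a).toReal : ℝ) : EReal) := by
    funext a; exact hrep _ _
  rw [heq]
  have hc1 : MeasurableSet {a | f a = ⊥ ∨ g a = ⊥} :=
    (hf (measurableSet_singleton ⊥)).union (hg (measurableSet_singleton ⊥))
  have hc2 : MeasurableSet {a | f a = ⊤ ∨ g a = ⊤} :=
    (hf (measurableSet_singleton ⊤)).union (hg (measurableSet_singleton ⊤))
  exact Measurable.ite hc1 measurable_const (Measurable.ite hc2 measurable_const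
    ((hf.ereal_toReal.add hg.ereal_toReal).coe_real_ereal))

variable {P : Measure Ω}

lemma measurable_V (b : BRW Ω P) : ∀ u : Label, Measurable (b.V u) := by
  intro u
  induction u with
  | nil => exact measurable_const
  | cons i u ih =>
    exact Measurable.ereal_add' ih ((measurable_pi_apply i).comp (b.meas u))

def listV : Label → (Label → ℕ → EReal) → EReal
  | [], _ => 0
  | i :: u, d => listV u d + d u i

lemma V_eq_listV (b : BRW Ω P) (u : Label) (ω : Ω) :
    b.V u ω = listV u fun v => b.disp v ω := by
  induction u with
  | nil => rfl
  | cons i u ih =>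
    show b.V u ω + b.disp u ω i = listV u (fun v => b.disp v ω) + b.disp u ω i
    rw [ih]

lemma measurable_listV (u : Label) : Measurable fun d : Label → ℕ → EReal => listV u d := by
  induction u with
  | nil => exact measurable_const
  | cons i u ih =>
    exact Measurable.ereal_add' ih ((measurable_pi_apply i).comp (measurable_pi_apply u))

lemma listV_congr : ∀ (u : Label) {d d' : Label → ℕ → EReal},
    (∀ v, v <:+ u → v ≠ u → d v = d' v) → listV u d = listV u d' := by
  intro u
  induction u with
  | nil => intro d d' _; rfl
  | cons i u ih =>
    intro d d' h
    show listV u d + d u i = listV u d' + d' u i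
    have h1 : ∀ v, v <:+ u → v ≠ u → d v = d' v := by
      intro v hv hne
      refine h v (hv.trans (List.suffix_cons i u)) ?_
      intro he
      subst he
      have := hv.length_le
      simp at this
    rw [ih h1, h u (List.suffix_cons i u) (fun he => by simpa using congrArg List.length he)]

def tailsFinset (u : Label) : Finset Label := u.tails.toFinset.erase u

lemma mem_tailsFinset {u v : Label} : v ∈ tailsFinset u ↔ v <:+ u ∧ v ≠ u := by
  rw [tailsFinset, Finset.mem_erase, List.mem_toFinset, List.mem_tails]
  tauto

lemma indepFun_V_disp (b : BRW Ω P) (u : Label) :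
    IndepFun (b.V u) (b.disp u) P := by
  have hdisj : Disjoint (tailsFinset u) ({u} : Finset Label) := by
    rw [Finset.disjoint_singleton_right, mem_tailsFinset]
    tauto
  have hbase := b.indep.indepFun_finset (tailsFinset u) {u} hdisj b.meas
  set φ : ({v : Label // v ∈ tailsFinset u} → ℕ → EReal) → EReal := fun g =>
    listV u fun v => if h : v ∈ tailsFinset u then g ⟨v, h⟩ else fun _ => ⊥ with hφ
  have hφm : Measurable φ := by
    refine (measurable_listV u).comp ?_
    refine measurable_pi_lambda _ fun v => ?_
    by_cases h : v ∈ tailsFinset u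
    · simp only [dif_pos h]
      exact measurable_pi_apply _
    · simp only [dif_neg h]
      exact measurable_const
  set ψ : ({v : Label // v ∈ ({u} : Finset Label)} → ℕ → EReal) → (ℕ → EReal) :=
    fun g => g ⟨u, Finset.mem_singleton_self u⟩ with hψ
  have hψm : Measurable ψ := measurable_pi_apply _
  have hcomp := hbase.comp hφm hψm
  have h1 : (φ ∘ fun ω (v : {v : Label // v ∈ tailsFinset u}) => b.disp v ω) = b.V u := by
    funext ω
    show listV u (fun v => if h : v ∈ tailsFinset u then b.disp v ω else fun _ => ⊥) = b.V u ω
    rw [V_eq_listV b u ω]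
    refine listV_congr u fun v hv hne => ?_
    rw [dif_pos (mem_tailsFinset.mpr ⟨hv, hne⟩)]
  have h2 : (ψ ∘ fun ω (v : {v : Label // v ∈ ({u} : Finset Label)}) => b.disp v ω) = b.disp u := rfl
  rwa [h1, h2] at hcomp

instance instUniqueLen0 : Unique {u : Label // u.length = 0} where
  default := ⟨[], rfl⟩
  uniq := by
    rintro ⟨(_ | ⟨i, v⟩), hu⟩
    · rfl
    · simp at hu

def consEquiv (n : ℕ) : {u : Label // u.length = n + 1} ≃ ℕ × {u : Label // u.length = n} where
  toFun w := (w.1.headI, ⟨w.1.tail, by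
    rcases w with ⟨(_ | ⟨i, v⟩), hw⟩
    · simp at hw
    · simpa using hw⟩)
  invFun p := ⟨p.1 :: p.2.1, by simp [p.2.2]⟩
  left_inv := by
    rintro ⟨(_ | ⟨i, v⟩), hw⟩
    · simp at hw
    · rfl
  right_inv := by rintro ⟨i, v, hv⟩; rfl

section ManyToOne

variable [IsProbabilityMeasure P] (b : BRW Ω P) {θ : ℝ} (hθ : 0 < θ)
include hθ

lemma ite_eexp (x : EReal) : (if x = ⊥ then 0 else eexp ((θ:EReal) * x)) = eexp ((θ:EReal) * x) := by
  by_cases h : x = ⊥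
  · rw [if_pos h, h, EReal.coe_mul_bot_of_pos hθ, eexp_bot]
  · rw [if_neg h]

lemma Lap_eq : b.Lap θ = ∫⁻ ω, ∑' i, eexp ((θ:EReal) * b.disp [] ω i) ∂P := by
  unfold BRW.Lap
  refine lintegral_congr fun ω => tsum_congr fun i => ?_
  have hv : b.V [i] ω = b.disp [] ω i := zero_add _
  rw [hv]
  exact ite_eexp hθ _

lemma measurable_W1gen (u : Label) :
    Measurable fun ω => ∑' i, eexp ((θ:EReal) * b.disp u ω i) :=
  Measurable.ennreal_tsum fun i =>
    (measurable_phi hθ).comp ((measurable_pi_apply i).comp (b.meas u))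

lemma lintegral_W1gen (u : Label) :
    ∫⁻ ω, ∑' i, eexp ((θ:EReal) * b.disp u ω i) ∂P = b.Lap θ := by
  rw [Lap_eq b hθ]
  have hg : Measurable fun d : ℕ → EReal => ∑' i, eexp ((θ:EReal) * d i) :=
    Measurable.ennreal_tsum fun i => (measurable_phi hθ).comp (measurable_pi_apply i)
  exact ((b.ident u List.nil).comp hg).lintegral_eq

lemma manyToOne : ∀ n : ℕ,
    ∫⁻ ω, ∑' u : {u : Label // u.length = n}, eexp ((θ:EReal) * b.V u ω) ∂P = b.Lap θ ^ n := by
  intro n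
  induction n with
  | zero =>
    rw [pow_zero]
    have h1 : ∀ ω, ∑' u : {u : Label // u.length = 0}, eexp ((θ:EReal) * b.V u ω) = 1 := by
      intro ω
      rw [tsum_eq_single (default : {u : Label // u.length = 0})
        (fun b' hb' => absurd (Unique.eq_default b') hb')]
      show eexp ((θ:EReal) * b.V [] ω) = 1
      show eexp ((θ:EReal) * 0) = 1
      rw [mul_zero, eexp_zero]
    simp only [h1]
    rw [lintegral_one, measure_univ]
  | succ n ih =>
    have hpt : ∀ ω, (∑' w : {u : Label // u.length = n + 1}, eexp ((θ:EReal) * b.V w ω))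
        = ∑' u : {u : Label // u.length = n},
            eexp ((θ:EReal) * b.V u ω) * ∑' i, eexp ((θ:EReal) * b.disp u ω i) := by
      intro ω
      rw [← Equiv.tsum_eq (consEquiv n).symm fun w => eexp ((θ:EReal) * b.V w ω)]
      have hterm : ∀ p : ℕ × {u : Label // u.length = n},
          eexp ((θ:EReal) * b.V (((consEquiv n).symm p) : {u : Label // u.length = n+1}) ω)
          = eexp ((θ:EReal) * b.V p.2 ω) * eexp ((θ:EReal) * b.disp p.2 ω p.1) := by
        rintro ⟨i, u, hu⟩
        show eexp ((θ:EReal) * b.V (i :: u) ω) = _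
        have : b.V (i :: u) ω = b.V u ω + b.disp u ω i := rfl
        rw [this, coe_pos_mul_add hθ, eexp_add]
      rw [tsum_congr hterm]
      rw [ENNReal.tsum_prod (f := fun (i : ℕ) (u : {u : Label // u.length = n}) =>
        eexp ((θ:EReal) * b.V u ω) * eexp ((θ:EReal) * b.disp u ω i))]
      rw [ENNReal.tsum_comm]
      exact tsum_congr fun u => ENNReal.tsum_mul_left
    have hmf : ∀ u : {u : Label // u.length = n}, Measurable fun ω => eexp ((θ:EReal) * b.V u ω) :=
      fun u => (measurable_phi hθ).comp (measurable_V b u)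
    have hmg : ∀ u : Label, Measurable fun ω => ∑' i, eexp ((θ:EReal) * b.disp u ω i) :=
      fun u => measurable_W1gen b hθ u
    calc ∫⁻ ω, ∑' w : {u : Label // u.length = n + 1}, eexp ((θ:EReal) * b.V w ω) ∂P
        = ∫⁻ ω, ∑' u : {u : Label // u.length = n},
            eexp ((θ:EReal) * b.V u ω) * ∑' i, eexp ((θ:EReal) * b.disp u ω i) ∂P :=
          lintegral_congr hpt
      _ = ∑' u : {u : Label // u.length = n}, ∫⁻ ω,
            eexp ((θ:EReal) * b.V u ω) * ∑' i, eexp ((θ:EReal) * b.disp u ω i) ∂P :=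
          lintegral_tsum fun u => ((hmf u).mul (hmg u)).aemeasurable
      _ = ∑' u : {u : Label // u.length = n},
            (∫⁻ ω, eexp ((θ:EReal) * b.V u ω) ∂P) * b.Lap θ := by
          refine tsum_congr fun u => ?_
          rw [← lintegral_W1gen b hθ u]
          have hgm : Measurable fun d : ℕ → EReal => ∑' i, eexp ((θ:EReal) * d i) :=
            Measurable.ennreal_tsum fun i => (measurable_phi hθ).comp (measurable_pi_apply i)
          have hind : IndepFun (fun ω => eexp ((θ:EReal) * b.V u ω))
              (fun ω => ∑' i, eexp ((θ:EReal) * b.disp u ω i)) P :=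
            (indepFun_V_disp b u).comp (measurable_phi hθ) hgm
          exact lintegral_mul_eq_lintegral_mul_lintegral_of_indepFun (hmf u) (hmg u) hind
      _ = (∑' u : {u : Label // u.length = n}, ∫⁻ ω, eexp ((θ:EReal) * b.V u ω) ∂P) * b.Lap θ :=
          ENNReal.tsum_mul_right
      _ = b.Lap θ ^ n * b.Lap θ := by
          rw [← lintegral_tsum fun u => (hmf u).aemeasurable, ih]
      _ = b.Lap θ ^ (n + 1) := (pow_succ _ _).symm

lemma lintegral_eexp_iSup_le (n : ℕ) :
    ∫⁻ ω, eexp ((θ:EReal) * ⨆ u : {u : Label // u.length = n}, b.V u ω) ∂P ≤ b.Lap θ ^ n := by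
  have hne : Nonempty {u : Label // u.length = n} := ⟨⟨List.replicate n 0, by simp⟩⟩
  rw [← manyToOne b hθ n]
  exact lintegral_mono fun ω => phi_iSup_le_tsum hθ (fun u : {u : Label // u.length = n} => b.V u ω)

end ManyToOne

end SpineAux


namespace SpineAux

lemma eexp_sub_real (x : EReal) (c : ℝ) :
    eexp (x - (c : EReal)) = ENNReal.ofReal (Real.exp (-c)) * eexp x := by
  induction x using EReal.rec with
  | bot => rw [EReal.bot_sub, eexp_bot, mul_zero]
  | top =>
    rw [EReal.top_sub_coe, eexp_top, ENNReal.mul_top (by simp [Real.exp_pos])]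
  | coe a =>
    rw [← EReal.coe_sub, eexp_coe, eexp_coe, ← ENNReal.ofReal_mul (Real.exp_nonneg _),
      ← Real.exp_add]
    ring_nf

lemma measurable_plog : Measurable plog := by
  unfold plog
  refine Measurable.ite measurableSet_eq measurable_const ?_
  exact ENNReal.measurable_ofReal.comp
    (Real.measurable_log.comp (ENNReal.measurable_toReal.max measurable_const))

lemma count_exp_le {c : ℝ} (hc : 0 < c) (w : ℝ≥0∞) :
    (∑' ℓ : ℕ, if ENNReal.ofReal (Real.exp (c * (ℓ+1))) < w then (1:ℝ≥0∞) else 0)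
      ≤ plog w * (ENNReal.ofReal c)⁻¹ := by
  by_cases hw : w = ⊤
  · rw [hw]
    have : plog (⊤:ℝ≥0∞) = ⊤ := by simp [plog]
    rw [this, ENNReal.top_mul]
    · exact le_top
    · simp [ENNReal.inv_ne_zero, ENNReal.ofReal_ne_top]
  · set A := Real.log (max w.toReal 1) / c with hA
    have hkey : ∀ ℓ : ℕ, ENNReal.ofReal (Real.exp (c * (ℓ+1))) < w → (ℓ : ℝ) + 1 < A := by
      intro ℓ hℓ
      have h1 : Real.exp (c * (ℓ+1)) < w.toReal :=
        (ENNReal.ofReal_lt_iff_lt_toReal (Real.exp_nonneg _) hw).mp hℓ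
      have h2 : (1:ℝ) < w.toReal := lt_of_le_of_lt (Real.one_le_exp (by positivity)) h1
      have h3 : max w.toReal 1 = w.toReal := max_eq_left h2.le
      have h4 : c * (ℓ+1) < Real.log w.toReal :=
        (Real.lt_log_iff_exp_lt (by linarith)).mpr h1
      rw [hA, h3]
      rw [lt_div_iff₀ hc, mul_comm]
      exact h4
    have hvanish : ∀ ℓ : ℕ, ℓ ∉ Finset.range ⌊A⌋₊ →
        (if ENNReal.ofReal (Real.exp (c * (ℓ+1))) < w then (1:ℝ≥0∞) else 0) = 0 := by
      intro ℓ hℓ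
      rw [Finset.mem_range, not_lt] at hℓ
      rw [if_neg]
      intro hcon
      have h5 := hkey ℓ hcon
      have h6 : A < (⌊A⌋₊ : ℝ) + 1 := Nat.lt_floor_add_one A
      have h7 : (⌊A⌋₊ : ℝ) ≤ (ℓ : ℝ) := by exact_mod_cast hℓ
      linarith
    rw [tsum_eq_sum hvanish]
    by_cases hA0 : 0 ≤ A
    · calc (∑ ℓ ∈ Finset.range ⌊A⌋₊, if ENNReal.ofReal (Real.exp (c * (ℓ+1))) < w
            then (1:ℝ≥0∞) else 0)
          ≤ ∑ _ℓ ∈ Finset.range ⌊A⌋₊, 1 :=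
            Finset.sum_le_sum fun ℓ _ => by split <;> simp
        _ = (⌊A⌋₊ : ℝ≥0∞) := by simp
        _ ≤ ENNReal.ofReal A := by
            rw [← ENNReal.ofReal_natCast]
            exact ENNReal.ofReal_le_ofReal (Nat.floor_le hA0)
        _ = plog w * (ENNReal.ofReal c)⁻¹ := by
            rw [hA, ENNReal.ofReal_div_of_pos hc, div_eq_mul_inv]
            congr 1
            simp [plog, hw]
    · have hA0' : A < 0 := not_le.mp hA0
      have hfl : ⌊A⌋₊ = 0 := Nat.floor_eq_zero.mpr (lt_of_lt_of_le hA0' zero_le_one)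
      rw [hfl]
      simp

variable {P : Measure Ω} [IsProbabilityMeasure P] {θ ψ ψ' : ℝ}
  (s : SpineSetup Ω P θ ψ ψ') (hθ : 0 < θ)
include hθ

lemma lap_noguard :
    ∫⁻ ω, ∑' i, eexp ((θ:EReal) * s.toBRW.V [i] ω) ∂P = s.toBRW.Lap θ := by
  unfold BRW.Lap
  exact lintegral_congr fun ω => tsum_congr fun i => (ite_eexp hθ _).symm

/-- clean form of the size-biased law. -/
lemma sbLaw' (k : ℕ) (f : (ℕ → EReal) × ℕ → ℝ≥0∞) (hf : Measurable f) :
    ∫⁻ ω, f (s.B k ω, s.W k ω) ∂P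
      = ∫⁻ ω, ∑' i : ℕ, ENNReal.ofReal (Real.exp (-ψ)) * eexp ((θ:EReal) * s.toBRW.V [i] ω)
          * f (fun j => s.toBRW.V [j] ω, i) ∂P := by
  rw [s.sbLaw k f hf]
  refine lintegral_congr fun ω => tsum_congr fun i => ?_
  by_cases h : s.toBRW.V [i] ω = ⊥
  · rw [if_pos h, h, EReal.coe_mul_bot_of_pos hθ, eexp_bot, mul_zero, zero_mul]
  · rw [if_neg h, eexp_sub_real, mul_assoc]

lemma sb_meas_integrand (f : (ℕ → EReal) × ℕ → ℝ≥0∞) (hf : Measurable f) :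
    Measurable fun ω => ∑' i : ℕ, ENNReal.ofReal (Real.exp (-ψ))
      * eexp ((θ:EReal) * s.toBRW.V [i] ω) * f (fun j => s.toBRW.V [j] ω, i) := by
  refine Measurable.ennreal_tsum fun i => ?_
  have h1 : Measurable fun ω => eexp ((θ:EReal) * s.toBRW.V [i] ω) :=
    (measurable_phi hθ).comp (measurable_V s.toBRW (i :: []))
  have h2 : Measurable fun ω => ((fun j => s.toBRW.V [j] ω, i) : (ℕ → EReal) × ℕ) :=
    Measurable.prodMk (measurable_pi_lambda _ fun j => measurable_V s.toBRW (j :: [])) measurable_const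
  exact (measurable_const.mul h1).mul (hf.comp h2)

lemma sb_norm :
    ∫⁻ ω, ∑' i : ℕ, ENNReal.ofReal (Real.exp (-ψ))
      * eexp ((θ:EReal) * s.toBRW.V [i] ω) ∂P = 1 := by
  have h1 : ∀ ω, (∑' i : ℕ, ENNReal.ofReal (Real.exp (-ψ)) * eexp ((θ:EReal) * s.toBRW.V [i] ω))
      = ENNReal.ofReal (Real.exp (-ψ)) * ∑' i : ℕ, eexp ((θ:EReal) * s.toBRW.V [i] ω) := fun ω =>
    ENNReal.tsum_mul_left
  simp only [h1]
  have hme : Measurable fun ω => ∑' i : ℕ, eexp ((θ:EReal) * s.toBRW.V [i] ω) :=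
    Measurable.ennreal_tsum fun i => (measurable_phi hθ).comp (measurable_V s.toBRW (i :: []))
  rw [lintegral_const_mul _ hme]
  rw [lap_noguard s hθ, s.lapEq, ← ENNReal.ofReal_mul (Real.exp_nonneg _), ← Real.exp_add]
  simp

lemma nm_pair (k : ℕ) :
    ∀ E : Set ((ℕ → EReal) × ℕ), MeasurableSet E →
      NullMeasurableSet ((fun ω => (s.B k ω, s.W k ω)) ⁻¹' E) P := by
  refine nullMeasurable_of_dist P
    (fun f => ∫⁻ ω, ∑' i : ℕ, ENNReal.ofReal (Real.exp (-ψ))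
      * eexp ((θ:EReal) * s.toBRW.V [i] ω) * f (fun j => s.toBRW.V [j] ω, i) ∂P)
    (fun f hf => sbLaw' s hθ k f hf) ?_
  intro E hE
  rw [← lintegral_add_left (sb_meas_integrand s hθ _
    ((measurable_const (a := (1:ℝ≥0∞))).indicator hE))]
  refine Eq.trans (lintegral_congr fun ω => ?_) (sb_norm s hθ)
  rw [← ENNReal.tsum_add]
  refine tsum_congr fun i => ?_
  rw [← mul_add]
  have hsum : (E.indicator (fun _ => (1:ℝ≥0∞)) ((fun j => s.toBRW.V [j] ω, i)))
      + Eᶜ.indicator (fun _ => (1:ℝ≥0∞)) ((fun j => s.toBRW.V [j] ω, i)) = 1 := by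
    by_cases h : ((fun j => s.toBRW.V [j] ω, i) : (ℕ → EReal) × ℕ) ∈ E
    · rw [Set.indicator_of_mem h, Set.indicator_of_notMem (by simpa using h), add_zero]
    · rw [Set.indicator_of_notMem h, Set.indicator_of_mem (by simpa using h), zero_add]
  rw [hsum, mul_one]

lemma nm_copy (i k : ℕ) :
    ∀ E : Set (Label → EReal), MeasurableSet E →
      NullMeasurableSet ((fun ω u => s.Vc i k u ω) ⁻¹' E) P := by
  refine nullMeasurable_of_dist P (fun f => ∫⁻ ω, f (fun u => s.toBRW.V u ω) ∂P)
    (fun f hf => s.copyLaw i k f hf) ?_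
  intro E hE
  have hVm : Measurable fun ω => (fun u => s.toBRW.V u ω) :=
    measurable_pi_lambda _ fun u => measurable_V s.toBRW u
  have hm1 : Measurable fun ω => E.indicator (fun _ => (1:ℝ≥0∞)) (fun u => s.toBRW.V u ω) :=
    ((measurable_const (a := (1:ℝ≥0∞))).indicator hE).comp hVm
  rw [← lintegral_add_left hm1]
  have hone : ∀ ω, (E.indicator (fun _ => (1:ℝ≥0∞)) (fun u => s.toBRW.V u ω))
      + Eᶜ.indicator (fun _ => (1:ℝ≥0∞)) (fun u => s.toBRW.V u ω) = 1 := by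
    intro ω
    by_cases h : (fun u => s.toBRW.V u ω) ∈ E
    · rw [Set.indicator_of_mem h, Set.indicator_of_notMem (by simpa using h), add_zero]
    · rw [Set.indicator_of_notMem h, Set.indicator_of_mem (by simpa using h), zero_add]
  calc ∫⁻ ω, (E.indicator (fun _ => (1:ℝ≥0∞)) (fun u => s.toBRW.V u ω)
        + Eᶜ.indicator (fun _ => (1:ℝ≥0∞)) (fun u => s.toBRW.V u ω)) ∂P
      = ∫⁻ _ω, (1:ℝ≥0∞) ∂P := lintegral_congr hone
    _ = 1 := by rw [lintegral_one, measure_univ]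

lemma exists_mods :
    ∃ (B' : ℕ → Ω → ℕ → EReal) (W' : ℕ → Ω → ℕ) (V' : ℕ → ℕ → Ω → Label → EReal),
      (∀ k, Measurable (B' k)) ∧ (∀ k, Measurable (W' k)) ∧ (∀ i k, Measurable (V' i k)) ∧
      (∀ k, ∀ᵐ ω ∂P, B' k ω = s.B k ω ∧ W' k ω = s.W k ω) ∧
      (∀ i k, ∀ᵐ ω ∂P, V' i k ω = fun u => s.Vc i k u ω) := by
  have hBcoord : ∀ k i, ∃ g : Ω → EReal, Measurable g ∧ g =ᵐ[P] fun ω => s.B k ω i := by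
    intro k i
    refine exists_measurable_mod_ereal fun E hE => ?_
    have : (fun ω => s.B k ω i) ⁻¹' E
        = (fun ω => (s.B k ω, s.W k ω)) ⁻¹' ((fun d : (ℕ → EReal) × ℕ => d.1 i) ⁻¹' E) := rfl
    rw [this]
    exact nm_pair s hθ k _ (((measurable_pi_apply i).comp measurable_fst) hE)
  have hWnat : ∀ k, ∃ g : Ω → ℕ, Measurable g ∧ g =ᵐ[P] s.W k := by
    intro k
    refine exists_measurable_mod_nat fun E hE => ?_
    have : (s.W k) ⁻¹' E
        = (fun ω => (s.B k ω, s.W k ω)) ⁻¹' ((fun d : (ℕ → EReal) × ℕ => d.2) ⁻¹' E) := rfl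
    rw [this]
    exact nm_pair s hθ k _ (measurable_snd hE)
  have hVcoord : ∀ i k u, ∃ g : Ω → EReal, Measurable g ∧ g =ᵐ[P] fun ω => s.Vc i k u ω := by
    intro i k u
    refine exists_measurable_mod_ereal fun E hE => ?_
    have : (fun ω => s.Vc i k u ω) ⁻¹' E
        = (fun ω (v : Label) => s.Vc i k v ω) ⁻¹' ((fun d : Label → EReal => d u) ⁻¹' E) := rfl
    rw [this]
    exact nm_copy s hθ i k _ ((measurable_pi_apply u) hE)
  choose Bg hBgm hBgae using hBcoord
  choose Wg hWgm hWgae using hWnat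
  choose Vg hVgm hVgae using hVcoord
  refine ⟨fun k ω i => Bg k i ω, Wg, fun i k ω u => Vg i k u ω,
    fun k => measurable_pi_lambda _ fun i => hBgm k i, hWgm,
    fun i k => measurable_pi_lambda _ fun u => hVgm i k u, ?_, ?_⟩
  · intro k
    have h1 : ∀ᵐ ω ∂P, ∀ i, Bg k i ω = s.B k ω i := ae_all_iff.mpr fun i => hBgae k i
    filter_upwards [h1, hWgae k] with ω hB hW
    exact ⟨funext hB, hW⟩
  · intro i k
    have h1 : ∀ᵐ ω ∂P, ∀ u, Vg i k u ω = s.Vc i k u ω := ae_all_iff.mpr fun u => hVgae i k u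
    filter_upwards [h1] with ω hV
    exact funext hV

end SpineAux

-- MAIN3

/-- (Lemma 2.3) Under (as1), (as3) and for
`ε ∈ (0, (ψ'(θ) − ψ(θ)/θ)/2)`, the probability of the complement of
`A_{n,ε} = { max_{ℓ≥n} (max_k M^{(k,ℓ)} − S_ℓ)/ℓ < −ε }` tends to `0`. -/
theorem spine_localization
    {Ω : Type} [MeasurableSpace Ω] {P : Measure Ω} [IsProbabilityMeasure P]
    {θ ψ ψ' : ℝ} (s : SpineSetup Ω P θ ψ ψ')
    (hθ : 0 < θ) (hsp : ψ < θ * ψ') (hL : s.toBRW.LlogL θ)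
    {ε : ℝ} (hε : ε ∈ Set.Ioo 0 ((ψ' - ψ / θ) / 2)) :
    Tendsto (fun n : ℕ => P (s.Aev n ε)ᶜ) atTop (𝓝 0) := by
  classical
  obtain ⟨hε0, hε2⟩ := hε
  set δ : ℝ := ε/4 with hδdef
  have hδ0 : 0 < δ := by positivity
  set tt : ℝ := ψ' - (3/2)*ε with httdef
  have hψθ : ψ/θ < ψ' - 2*ε := by
    have h1 : ψ/θ < ψ' := (div_lt_iff₀ hθ).mpr (by linarith [hsp])
    linarith
  have hgeo : ψ - θ*(tt - δ) < 0 := by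
    have h2 : ψ/θ < tt - δ := by rw [httdef, hδdef]; linarith
    have h3 : ψ < (tt - δ) * θ := (div_lt_iff₀ hθ).mp h2
    nlinarith
  -- measurable modifications
  obtain ⟨B', W', V', hBm, hWm, hVm, hBW, hV⟩ := SpineAux.exists_mods s hθ
  set X' : ℕ → Ω → (ℕ → EReal) × ℕ := fun k ω => (B' k ω, W' k ω) with hX'def
  have hX'm : ∀ k, Measurable (X' k) := fun k => (hBm k).prodMk (hWm k)
  have hX'ae : ∀ k, (fun ω => (s.B k ω, s.W k ω)) =ᵐ[P] X' k := by
    intro k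
    filter_upwards [hBW k] with ω h
    show (s.B k ω, s.W k ω) = (B' k ω, W' k ω)
    rw [h.1, h.2]
  have hLaw : ∀ (k : ℕ) (f : (ℕ → EReal) × ℕ → ℝ≥0∞), Measurable f →
      ∫⁻ ω, f (X' k ω) ∂P = ∫⁻ ω, ∑' i : ℕ, ENNReal.ofReal (Real.exp (-ψ))
        * eexp ((θ:EReal) * s.toBRW.V [i] ω) * f (fun j => s.toBRW.V [j] ω, i) ∂P := by
    intro k f hf
    rw [← SpineAux.sbLaw' s hθ k f hf]
    refine lintegral_congr_ae ?_
    filter_upwards [hX'ae k] with ω h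
    rw [h]
  have hCopy : ∀ (i k : ℕ) (f : (Label → EReal) → ℝ≥0∞), Measurable f →
      ∫⁻ ω, f (V' i k ω) ∂P = ∫⁻ ω, f (fun u => s.toBRW.V u ω) ∂P := by
    intro i k f hf
    rw [← s.copyLaw i k f hf]
    refine lintegral_congr_ae ?_
    filter_upwards [hV i k] with ω h
    rw [h]
  -- independence transfers
  have hIndepPair : ∀ i j : ℕ, i ≠ j → IndepFun (X' i) (X' j) P := by
    intro i j hij
    have hne : (Sum.inl i : SpIdx) ≠ Sum.inl j := fun h => hij (Sum.inl.inj h)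
    have hraw := s.indepAll.indepFun hne
    exact IndepFun.congr hraw (hX'ae i) (hX'ae j)
  have hIndepXV : ∀ k ℓ : ℕ, IndepFun (X' ℓ) (V' k ℓ) P := by
    intro k ℓ
    have hne : (Sum.inl ℓ : SpIdx) ≠ Sum.inr (k, ℓ) := by simp
    have hraw := s.indepAll.indepFun hne
    exact IndepFun.congr hraw (hX'ae ℓ) ((hV k ℓ).mono fun ω h => h.symm)
  -- the spine walk and its SLLN
  have hev : Measurable fun d : (ℕ → EReal) × ℕ => (d.1 d.2).toReal :=
    measurable_ereal_toReal.comp (measurable_from_prod_countable_left fun n => measurable_pi_apply n)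
  set step : ℕ → Ω → ℝ := fun k ω => ((X' k ω).1 ((X' k ω).2)).toReal with hstepdef
  have hstepm : ∀ k, Measurable (step k) := fun k => hev.comp (hX'm k)
  have hstep_ae : ∀ k, step k =ᵐ[P] fun ω => (s.B k ω (s.W k ω)).toReal := by
    intro k
    filter_upwards [hBW k] with ω h
    show ((B' k ω) (W' k ω)).toReal = (s.B k ω (s.W k ω)).toReal
    rw [h.1, h.2]
  have hident : ∀ k, IdentDistrib (step k) (step 0) P P := by
    intro k
    refine ⟨(hstepm k).aemeasurable, (hstepm 0).aemeasurable, ?_⟩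
    refine Measure.ext fun E hE => ?_
    rw [Measure.map_apply (hstepm k) hE, Measure.map_apply (hstepm 0) hE]
    set g : (ℕ → EReal) × ℕ → ℝ≥0∞ := fun d => E.indicator (fun _ => (1:ℝ≥0∞)) ((d.1 d.2).toReal)
      with hgdef
    have hg : Measurable g := ((measurable_const (a := (1:ℝ≥0∞))).indicator hE).comp hev
    have hind : ∀ m : ℕ, P (step m ⁻¹' E) = ∫⁻ ω, g (X' m ω) ∂P := by
      intro m
      rw [← lintegral_indicator_one ((hstepm m) hE)]
      refine lintegral_congr fun ω => ?_
      show Set.indicator (step m ⁻¹' E) (fun _ => (1:ℝ≥0∞)) ω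
        = E.indicator (fun _ => (1:ℝ≥0∞)) (((X' m ω).1 ((X' m ω).2)).toReal)
      simp only [Set.indicator_apply]
      exact if_congr Iff.rfl rfl rfl
    rw [hind k, hind 0, hLaw k g hg, hLaw 0 g hg]
  have hInt : Integrable (step 0) P := s.stepInt.congr (hstep_ae 0).symm
  have hMean : ∫ ω, step 0 ω ∂P = ψ' := by
    rw [integral_congr_ae (hstep_ae 0)]; exact s.stepMean
  have hPairwise : Pairwise (Function.onFun (IndepFun · · P) step) := fun i j hij =>
    (hIndepPair i j hij).comp hev hev
  have hSLLN : ∀ᵐ ω ∂P, Tendsto (fun n : ℕ => (∑ i ∈ Finset.range n, step i ω)/n)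
      atTop (𝓝 ψ') := by
    have h := strong_law_ae_real step hInt hPairwise hident
    rw [show P[step 0] = ψ' from hMean] at h
    exact h
  -- key sets
  set xb : ℕ → ℝ≥0∞ := fun ℓ => ENNReal.ofReal (Real.exp (θ * δ * (ℓ+1))) with hxbdef
  set Wt : ℕ → Ω → ℝ≥0∞ := fun ℓ ω => ∑' k, eexp ((θ:EReal) * B' ℓ ω k) with hWtdef
  have hWtm : ∀ ℓ, Measurable (Wt ℓ) := fun ℓ => Measurable.ennreal_tsum fun k =>
    (SpineAux.measurable_phi hθ).comp ((measurable_pi_apply k).comp (hBm ℓ))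
  set Fs : ℕ → Set Ω := fun ℓ => {ω | xb ℓ < Wt ℓ ω} with hFsdef
  have hFsm : ∀ ℓ, MeasurableSet (Fs ℓ) := fun ℓ => measurableSet_lt measurable_const (hWtm ℓ)
  set Ms : ℕ → ℕ → Ω → EReal :=
    fun k ℓ ω => ⨆ u : {u : Label // u.length = ℓ}, V' k ℓ ω u with hMsdef
  have hMsm : ∀ k ℓ, Measurable (Ms k ℓ) := fun k ℓ =>
    Measurable.iSup fun u => (measurable_pi_apply (u : Label)).comp (hVm k ℓ)
  set Gs : ℕ → Set Ω :=
    fun ℓ => {ω | ∃ k, ((tt * (ℓ+1) : ℝ) : EReal) < B' ℓ ω k + Ms k ℓ ω} with hGsdef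
  have hGsm : ∀ ℓ, MeasurableSet (Gs ℓ) := by
    intro ℓ
    have hrw : Gs ℓ = ⋃ k, {ω | ((tt * (ℓ+1) : ℝ) : EReal) < B' ℓ ω k + Ms k ℓ ω} := by
      ext ω; simp [hGsdef]
    rw [hrw]
    exact MeasurableSet.iUnion fun k => measurableSet_lt measurable_const
      (Measurable.ereal_add' ((measurable_pi_apply k).comp (hBm ℓ)) (hMsm k ℓ))
  set Ts : ℕ → Set Ω := fun n =>
    {ω | ∃ ℓ, n ≤ ℓ ∧ (∑ i ∈ Finset.range (ℓ+1), step i ω) ≤ (ψ' - ε/4) * (ℓ+1)} with hTsdef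
  have hTsm : ∀ n, MeasurableSet (Ts n) := by
    intro n
    have hrw : Ts n = ⋃ ℓ, ⋃ (_ : n ≤ ℓ),
        {ω | (∑ i ∈ Finset.range (ℓ+1), step i ω) ≤ (ψ' - ε/4) * (ℓ+1)} := by
      ext ω; simp [hTsdef]
    rw [hrw]
    exact MeasurableSet.iUnion fun ℓ => MeasurableSet.iUnion fun _ =>
      measurableSet_le (Finset.measurable_sum _ fun i _ => hstepm i) measurable_const
  -- F bound
  set W1' : Ω → ℝ≥0∞ := fun ω => ∑' j, eexp ((θ:EReal) * s.toBRW.V [j] ω) with hW1def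
  have hW1m : Measurable W1' := Measurable.ennreal_tsum fun j =>
    (SpineAux.measurable_phi hθ).comp (SpineAux.measurable_V s.toBRW (j :: []))
  have hW1eq : ∀ ω, s.toBRW.W1 θ ω = W1' ω := fun ω =>
    tsum_congr fun j => SpineAux.ite_eexp hθ _
  set κ : ℕ → Ω → ℝ≥0∞ := fun ℓ ω => if xb ℓ < W1' ω then 1 else 0 with hκdef
  have hκm : ∀ ℓ, Measurable (κ ℓ) := fun ℓ => by
    rw [hκdef]
    exact Measurable.ite (measurableSet_lt measurable_const hW1m)
      measurable_const measurable_const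
  have hFval : ∀ ℓ, P (Fs ℓ) = ENNReal.ofReal (Real.exp (-ψ)) * ∫⁻ ω, W1' ω * κ ℓ ω ∂P := by
    intro ℓ
    set fF : (ℕ → EReal) × ℕ → ℝ≥0∞ :=
      fun d => if xb ℓ < ∑' j, eexp ((θ:EReal) * d.1 j) then 1 else 0 with hfFdef
    have hfFm : Measurable fF := by
      rw [hfFdef]
      refine Measurable.ite (measurableSet_lt measurable_const ?_) measurable_const
        measurable_const
      exact Measurable.ennreal_tsum fun j =>
        (SpineAux.measurable_phi hθ).comp ((measurable_pi_apply j).comp measurable_fst)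
    have h1 : P (Fs ℓ) = ∫⁻ ω, fF (X' ℓ ω) ∂P := by
      rw [← lintegral_indicator_one (hFsm ℓ)]
      refine lintegral_congr fun ω => ?_
      by_cases h : ω ∈ Fs ℓ
      · rw [Set.indicator_of_mem h, hfFdef]
        exact (if_pos h).symm
      · rw [Set.indicator_of_notMem h, hfFdef]
        exact (if_neg h).symm
    rw [h1, hLaw ℓ fF hfFm]
    have h2 : ∀ ω, (∑' i : ℕ, ENNReal.ofReal (Real.exp (-ψ))
        * eexp ((θ:EReal) * s.toBRW.V [i] ω) * fF (fun j => s.toBRW.V [j] ω, i))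
        = ENNReal.ofReal (Real.exp (-ψ)) * (W1' ω * κ ℓ ω) := by
      intro ω
      have h3 : ∀ i : ℕ, fF ((fun j => s.toBRW.V [j] ω, i)) = κ ℓ ω := fun i => rfl
      simp only [h3]
      rw [ENNReal.tsum_mul_right, ENNReal.tsum_mul_left, mul_assoc]
    simp only [h2]
    rw [lintegral_const_mul (f := fun ω => W1' ω * κ ℓ ω) _ (hW1m.mul (hκm ℓ))]
  have hFsum : (∑' ℓ, P (Fs ℓ)) ≤ ENNReal.ofReal (Real.exp (-ψ))
      * ((ENNReal.ofReal (θ*δ))⁻¹ * ∫⁻ ω, W1' ω * plog (W1' ω) ∂P) := by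
    calc (∑' ℓ, P (Fs ℓ))
        = ENNReal.ofReal (Real.exp (-ψ)) * ∑' ℓ, ∫⁻ ω, W1' ω * κ ℓ ω ∂P := by
          simp only [hFval]; rw [ENNReal.tsum_mul_left]
      _ = ENNReal.ofReal (Real.exp (-ψ)) * ∫⁻ ω, ∑' ℓ, W1' ω * κ ℓ ω ∂P := by
          rw [lintegral_tsum (f := fun ℓ ω => W1' ω * κ ℓ ω) fun ℓ => (hW1m.mul (hκm ℓ)).aemeasurable]
      _ ≤ ENNReal.ofReal (Real.exp (-ψ))
          * ∫⁻ ω, W1' ω * (plog (W1' ω) * (ENNReal.ofReal (θ*δ))⁻¹) ∂P := by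
          refine mul_le_mul_right (lintegral_mono fun ω => ?_) _
          rw [ENNReal.tsum_mul_left]
          refine mul_le_mul_right ?_ _
          have := SpineAux.count_exp_le (mul_pos hθ hδ0) (W1' ω)
          exact this
      _ = ENNReal.ofReal (Real.exp (-ψ))
          * ((ENNReal.ofReal (θ*δ))⁻¹ * ∫⁻ ω, W1' ω * plog (W1' ω) ∂P) := by
          congr 1
          have hWplogm : Measurable fun ω => W1' ω * plog (W1' ω) :=
            hW1m.mul (SpineAux.measurable_plog.comp hW1m)
          rw [← lintegral_const_mul _ hWplogm]
          refine lintegral_congr fun ω => ?_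
          ring
  have hLlogL : (∫⁻ ω, W1' ω * plog (W1' ω) ∂P) < ⊤ := by
    refine lt_of_eq_of_lt ?_ hL
    refine lintegral_congr fun ω => ?_
    rw [hW1eq ω]
  -- G bound
  have hLapPow : ∀ (k ℓ : ℕ), (∫⁻ ω, eexp ((θ:EReal) * Ms k ℓ ω) ∂P)
      ≤ ENNReal.ofReal (Real.exp ψ) ^ ℓ := by
    intro k ℓ
    set fC : (Label → EReal) → ℝ≥0∞ :=
      fun y => eexp ((θ:EReal) * ⨆ u : {u : Label // u.length = ℓ}, y u) with hfCdef
    have hfCm : Measurable fC := (SpineAux.measurable_phi hθ).comp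
      (Measurable.iSup fun u => measurable_pi_apply (u : Label))
    have h1 : (∫⁻ ω, eexp ((θ:EReal) * Ms k ℓ ω) ∂P) = ∫⁻ ω, fC (V' k ℓ ω) ∂P := rfl
    rw [h1, hCopy k ℓ fC hfCm]
    have h2 := SpineAux.lintegral_eexp_iSup_le s.toBRW hθ ℓ
    rw [s.lapEq] at h2
    exact h2
  have hGval : ∀ ℓ, P (Gs ℓ \ Fs ℓ) ≤ ENNReal.ofReal (Real.exp (-(θ * (tt * (ℓ+1)))))
      * (xb ℓ * ENNReal.ofReal (Real.exp ψ) ^ ℓ) := by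
    intro ℓ
    set c : ℝ≥0∞ := ENNReal.ofReal (Real.exp (-(θ * (tt * (ℓ+1))))) with hcdef
    set A : ℕ → Ω → ℝ≥0∞ :=
      fun k ω => (Fs ℓ)ᶜ.indicator (fun _ => (1:ℝ≥0∞)) ω * eexp ((θ:EReal) * B' ℓ ω k)
      with hAdef
    have hAm : ∀ k, Measurable (A k) := fun k =>
      ((measurable_const (a := (1:ℝ≥0∞))).indicator (hFsm ℓ).compl).mul
        ((SpineAux.measurable_phi hθ).comp ((measurable_pi_apply k).comp (hBm ℓ)))
    set C : ℕ → Ω → ℝ≥0∞ := fun k ω => eexp ((θ:EReal) * Ms k ℓ ω) with hCdef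
    have hCm : ∀ k, Measurable (C k) := fun k => (SpineAux.measurable_phi hθ).comp (hMsm k ℓ)
    have hpt : ∀ ω, (Gs ℓ \ Fs ℓ).indicator (fun _ => (1:ℝ≥0∞)) ω
        ≤ c * ∑' k, A k ω * C k ω := by
      intro ω
      by_cases hmem : ω ∈ Gs ℓ \ Fs ℓ
      · rw [Set.indicator_of_mem hmem]
        obtain ⟨k0, hk0⟩ := hmem.1
        have hF : (Fs ℓ)ᶜ.indicator (fun _ => (1:ℝ≥0∞)) ω = 1 :=
          Set.indicator_of_mem (show ω ∈ (Fs ℓ)ᶜ from hmem.2) (fun _ => (1:ℝ≥0∞))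
        have hterm : ENNReal.ofReal (Real.exp (θ * (tt * (ℓ+1)))) ≤ A k0 ω * C k0 ω := by
          show _ ≤ ((Fs ℓ)ᶜ.indicator (fun _ => (1:ℝ≥0∞)) ω * eexp ((θ:EReal) * B' ℓ ω k0))
            * eexp ((θ:EReal) * Ms k0 ℓ ω)
          rw [hF, one_mul, ← SpineAux.eexp_add, ← SpineAux.coe_pos_mul_add hθ]
          refine le_trans (le_of_eq ?_) (SpineAux.phi_mono hθ hk0.le)
          rw [← EReal.coe_mul, SpineAux.eexp_coe]
        calc (1:ℝ≥0∞) = c * ENNReal.ofReal (Real.exp (θ * (tt * (ℓ+1)))) := by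
              rw [hcdef, ← ENNReal.ofReal_mul (Real.exp_nonneg _), ← Real.exp_add]
              simp
          _ ≤ c * (A k0 ω * C k0 ω) := mul_le_mul_right hterm _
          _ ≤ c * ∑' k, A k ω * C k ω :=
              mul_le_mul_right (ENNReal.le_tsum k0) _
      · rw [Set.indicator_of_notMem hmem]
        exact zero_le
    have hsumA : (∑' k, ∫⁻ ω, A k ω ∂P) ≤ xb ℓ := by
      rw [← lintegral_tsum fun k => (hAm k).aemeasurable]
      have hptA : ∀ ω, (∑' k, A k ω) ≤ xb ℓ := by
        intro ω
        rw [hAdef]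
        by_cases h : ω ∈ (Fs ℓ)ᶜ
        · have h1 : Wt ℓ ω ≤ xb ℓ := not_lt.mp h
          have h2 : ∀ k : ℕ, (Fs ℓ)ᶜ.indicator (fun _ => (1:ℝ≥0∞)) ω
              * eexp ((θ:EReal) * B' ℓ ω k) = eexp ((θ:EReal) * B' ℓ ω k) := fun k => by
            rw [Set.indicator_of_mem h, one_mul]
          refine le_trans (le_of_eq (tsum_congr h2)) h1
        · have h2 : ∀ k : ℕ, (Fs ℓ)ᶜ.indicator (fun _ => (1:ℝ≥0∞)) ω
              * eexp ((θ:EReal) * B' ℓ ω k) = 0 := fun k => by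
            rw [Set.indicator_of_notMem h, zero_mul]
          rw [tsum_congr h2]
          simp
      calc ∫⁻ ω, ∑' k, A k ω ∂P ≤ ∫⁻ _ω, xb ℓ ∂P := lintegral_mono hptA
        _ = xb ℓ := by rw [lintegral_const, measure_univ, mul_one]
    calc P (Gs ℓ \ Fs ℓ) = ∫⁻ ω, (Gs ℓ \ Fs ℓ).indicator (fun _ => (1:ℝ≥0∞)) ω ∂P :=
          (lintegral_indicator_one ((hGsm ℓ).diff (hFsm ℓ))).symm
      _ ≤ ∫⁻ ω, c * ∑' k, A k ω * C k ω ∂P := lintegral_mono hpt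
      _ = c * ∫⁻ ω, ∑' k, A k ω * C k ω ∂P := by
          rw [lintegral_const_mul (f := fun ω => ∑' k, A k ω * C k ω) _ (Measurable.ennreal_tsum fun k => (hAm k).mul (hCm k))]
      _ = c * ∑' k, ∫⁻ ω, A k ω * C k ω ∂P := by
          rw [lintegral_tsum (f := fun k ω => A k ω * C k ω) fun k => ((hAm k).mul (hCm k)).aemeasurable]
      _ = c * ∑' k, (∫⁻ ω, A k ω ∂P) * ∫⁻ ω, C k ω ∂P := by
          congr 1
          refine tsum_congr fun k => ?_
          set fA : (ℕ → EReal) × ℕ → ℝ≥0∞ := fun d =>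
            (if xb ℓ < ∑' j, eexp ((θ:EReal) * d.1 j) then (0:ℝ≥0∞) else 1)
              * eexp ((θ:EReal) * d.1 k) with hfAdef
          have hfAm : Measurable fA := by
            rw [hfAdef]
            refine Measurable.mul ?_ ((SpineAux.measurable_phi hθ).comp
              ((measurable_pi_apply k).comp measurable_fst))
            refine Measurable.ite (measurableSet_lt measurable_const ?_) measurable_const
              measurable_const
            exact Measurable.ennreal_tsum fun j =>
              (SpineAux.measurable_phi hθ).comp ((measurable_pi_apply j).comp measurable_fst)
          set fC : (Label → EReal) → ℝ≥0∞ :=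
            fun y => eexp ((θ:EReal) * ⨆ u : {u : Label // u.length = ℓ}, y u) with hfCdef
          have hfCm : Measurable fC := (SpineAux.measurable_phi hθ).comp
            (Measurable.iSup fun u => measurable_pi_apply (u : Label))
          have hAeq : A k = fun ω => fA (X' ℓ ω) := by
            funext ω
            show (Fs ℓ)ᶜ.indicator (fun _ => (1:ℝ≥0∞)) ω * eexp ((θ:EReal) * B' ℓ ω k)
              = (if xb ℓ < ∑' j, eexp ((θ:EReal) * (X' ℓ ω).1 j) then (0:ℝ≥0∞) else 1)
                * eexp ((θ:EReal) * (X' ℓ ω).1 k)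
            congr 1
            by_cases h : ω ∈ Fs ℓ
            · rw [Set.indicator_of_notMem (show ¬ ω ∈ (Fs ℓ)ᶜ by simpa using h),
                if_pos (show xb ℓ < ∑' j, eexp ((θ:EReal) * (X' ℓ ω).1 j) from h)]
            · rw [Set.indicator_of_mem (show ω ∈ (Fs ℓ)ᶜ from h),
                if_neg (show ¬ xb ℓ < ∑' j, eexp ((θ:EReal) * (X' ℓ ω).1 j) from h)]
          have hCeq : C k = fun ω => fC (V' k ℓ ω) := rfl
          have hindep : IndepFun (fun ω => fA (X' ℓ ω)) (fun ω => fC (V' k ℓ ω)) P :=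
            (hIndepXV k ℓ).comp hfAm hfCm
          rw [hAeq, hCeq]
          exact lintegral_mul_eq_lintegral_mul_lintegral_of_indepFun
            (hfAm.comp (hX'm ℓ)) (hfCm.comp (hVm k ℓ)) hindep
      _ ≤ c * ∑' k, (∫⁻ ω, A k ω ∂P) * ENNReal.ofReal (Real.exp ψ) ^ ℓ := by
          refine mul_le_mul_right (ENNReal.tsum_le_tsum fun k =>
            mul_le_mul_right (hLapPow k ℓ) _) _
      _ = c * ((∑' k, ∫⁻ ω, A k ω ∂P) * ENNReal.ofReal (Real.exp ψ) ^ ℓ) := by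
          rw [ENNReal.tsum_mul_right]
      _ ≤ c * (xb ℓ * ENNReal.ofReal (Real.exp ψ) ^ ℓ) :=
          mul_le_mul_right (mul_le_mul_left hsumA _) _
  -- summability of the G bounds
  set q : ℕ → ℝ≥0∞ := fun ℓ => P (Fs ℓ) + P (Gs ℓ \ Fs ℓ) with hqdef
  have hGsub : ∀ ℓ, P (Gs ℓ) ≤ q ℓ := by
    intro ℓ
    refine le_trans (measure_mono ?_) (measure_union_le _ _)
    intro ω hω
    by_cases h : ω ∈ Fs ℓ
    · exact Or.inl h
    · exact Or.inr ⟨hω, h⟩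
  have hcollapse : ∀ (a b : ℝ) (n : ℕ), ENNReal.ofReal (Real.exp a)
      * ENNReal.ofReal (Real.exp b) ^ n = ENNReal.ofReal (Real.exp (a + n*b)) := by
    intro a b n
    rw [← ENNReal.ofReal_pow (Real.exp_nonneg _), ← Real.exp_nat_mul,
      ← ENNReal.ofReal_mul (Real.exp_nonneg _), ← Real.exp_add]
  have hqsum : (∑' ℓ, q ℓ) ≠ ⊤ := by
    rw [hqdef, ENNReal.tsum_add]
    refine ENNReal.add_ne_top.mpr ⟨?_, ?_⟩
    · refine ne_top_of_le_ne_top ?_ hFsum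
      refine ENNReal.mul_ne_top (by simp) (ENNReal.mul_ne_top ?_ hLlogL.ne)
      exact ENNReal.inv_ne_top.mpr (ENNReal.ofReal_pos.mpr (mul_pos hθ hδ0)).ne'
    · have hbound : ∀ ℓ : ℕ, P (Gs ℓ \ Fs ℓ)
          ≤ ENNReal.ofReal (Real.exp (-(θ*(tt-δ))))
            * ENNReal.ofReal (Real.exp (ψ - θ*(tt-δ))) ^ ℓ := by
        intro ℓ
        refine le_trans (hGval ℓ) (le_of_eq ?_)
        rw [hxbdef, hcollapse, hcollapse]
        rw [← ENNReal.ofReal_mul (Real.exp_nonneg _), ← Real.exp_add]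
        congr 1
        push_cast
        ring
      refine ne_top_of_le_ne_top ?_ (ENNReal.tsum_le_tsum hbound)
      rw [ENNReal.tsum_mul_left]
      refine ENNReal.mul_ne_top (by simp) ?_
      rw [ENNReal.tsum_geometric]
      refine ENNReal.inv_ne_top.mpr ?_
      have hr1 : ENNReal.ofReal (Real.exp (ψ - θ*(tt-δ))) < 1 := by
        rw [← ENNReal.ofReal_one]
        refine ENNReal.ofReal_lt_ofReal_iff_of_nonneg (Real.exp_nonneg _) |>.mpr ?_
        rw [show (1:ℝ) = Real.exp 0 by simp]
        exact Real.exp_lt_exp.mpr hgeo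
      exact (tsub_pos_of_lt hr1).ne'
  -- SLLN kills Ts
  have hTnull : P (⋂ n, Ts n) = 0 := by
    have hsub : (⋂ n, Ts n) ⊆ {ω | ¬ Tendsto (fun n : ℕ =>
        (∑ i ∈ Finset.range n, step i ω)/n) atTop (𝓝 ψ')} := by
      intro ω hω hconv
      have hlt : ψ' - ε/4 < ψ' := by linarith
      have hev' : ∀ᶠ m in (atTop : Filter ℕ), ψ' - ε/4
          < (∑ i ∈ Finset.range m, step i ω)/m :=
        hconv.eventually (eventually_gt_nhds hlt)
      obtain ⟨m0, hm0⟩ := eventually_atTop.mp hev'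
      obtain ⟨ℓ, hℓn, hℓ⟩ := Set.mem_iInter.mp hω m0
      have h1 := hm0 (ℓ+1) (by omega)
      have h2 : (0:ℝ) < ((ℓ+1 : ℕ):ℝ) := by positivity
      rw [lt_div_iff₀ h2] at h1
      have h3 : ((ℓ+1 : ℕ):ℝ) = (ℓ:ℝ) + 1 := by push_cast; ring
      rw [h3] at h1
      linarith
    exact measure_mono_null hsub (ae_iff.mp hSLLN)
  have hTanti : Antitone Ts := by
    intro n m hnm ω hω
    obtain ⟨ℓ, h1, h2⟩ := hω
    exact ⟨ℓ, le_trans hnm h1, h2⟩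
  have hTtend : Tendsto (fun n => P (Ts n)) atTop (𝓝 0) := by
    have h := tendsto_measure_iInter_atTop (fun n => (hTsm n).nullMeasurableSet) hTanti
      ⟨0, measure_ne_top P _⟩
    rw [hTnull] at h
    exact h
  -- the master inclusion
  set Nb : Set Ω := {ω | ¬ ((∀ k : ℕ, B' k ω = s.B k ω ∧ W' k ω = s.W k ω)
      ∧ (∀ i k : ℕ, V' i k ω = fun u => s.Vc i k u ω))} with hNbdef
  have hNbnull : P Nb = 0 := by
    have hae : ∀ᵐ ω ∂P, (∀ k : ℕ, B' k ω = s.B k ω ∧ W' k ω = s.W k ω)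
        ∧ (∀ i k : ℕ, V' i k ω = fun u => s.Vc i k u ω) :=
      Filter.Eventually.and (ae_all_iff.mpr hBW)
        (ae_all_iff.mpr fun i => ae_all_iff.mpr (hV i))
    exact ae_iff.mp hae
  have hincl : ∀ n, (s.Aev n ε)ᶜ ⊆ Nb ∪ (Ts n ∪ ⋃ j, Gs (j + n)) := by
    intro n ω hω
    rw [Set.mem_compl_iff] at hω
    by_contra hno
    simp only [Set.mem_union, Set.mem_iUnion, not_or, not_exists] at hno
    obtain ⟨hNb', hTs', hGs'⟩ := hno
    apply hω
    have hGood := not_not.mp hNb'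
    obtain ⟨hGB, hGV⟩ := hGood
    intro ℓ hℓ
    have hGω : ω ∉ Gs ℓ := by
      have h := hGs' (ℓ - n)
      rwa [Nat.sub_add_cancel hℓ] at h
    have hSgt : (ψ' - ε/4) * ((ℓ:ℝ)+1) < ∑ i ∈ Finset.range (ℓ+1), step i ω := by
      by_contra hc
      exact hTs' ⟨ℓ, hℓ, not_lt.mp hc⟩
    have hSeq : s.S (ℓ+1) ω = ∑ i ∈ Finset.range (ℓ+1), step i ω := by
      unfold SpineSetup.S
      refine Finset.sum_congr rfl fun i _ => ?_
      show (s.B i ω (s.W i ω)).toReal = ((B' i ω) (W' i ω)).toReal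
      rw [(hGB i).1, (hGB i).2]
    have hsup : (⨆ k : ℕ, (s.B ℓ ω k + ⨆ u : {u : Label // u.length = ℓ}, s.Vc k ℓ u ω))
        ≤ ((tt * ((ℓ:ℝ)+1) : ℝ) : EReal) := by
      refine iSup_le fun k => ?_
      have h1 : s.B ℓ ω k + (⨆ u : {u : Label // u.length = ℓ}, s.Vc k ℓ u ω)
          = B' ℓ ω k + Ms k ℓ ω := by
        rw [(hGB ℓ).1, hMsdef]
        congr 1
        refine iSup_congr fun u => ?_
        rw [hGV k ℓ]
      rw [h1]
      by_contra h2
      exact hGω ⟨k, not_le.mp h2⟩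
    have hSgt' : (ψ' - ε/4) * ((ℓ:ℝ)+1) < s.S (ℓ+1) ω := by rw [hSeq]; exact hSgt
    have hreal : tt * ((ℓ:ℝ)+1) - s.S (ℓ+1) ω < -ε * ((ℓ:ℝ)+1) := by
      have h2 : (0:ℝ) < (ℓ:ℝ)+1 := by positivity
      rw [httdef]
      nlinarith
    calc (⨆ k : ℕ, (s.B ℓ ω k + ⨆ u : {u : Label // u.length = ℓ}, s.Vc k ℓ u ω))
          - ((s.S (ℓ+1) ω : ℝ) : EReal)
        ≤ ((tt * ((ℓ:ℝ)+1) : ℝ) : EReal) - ((s.S (ℓ+1) ω : ℝ) : EReal) :=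
          EReal.sub_le_sub hsup le_rfl
      _ = (((tt * ((ℓ:ℝ)+1) - s.S (ℓ+1) ω) : ℝ) : EReal) := (EReal.coe_sub _ _).symm
      _ < ((-ε * ((ℓ:ℝ)+1) : ℝ) : EReal) := EReal.coe_lt_coe_iff.mpr hreal
  have hbound : ∀ n, P (s.Aev n ε)ᶜ ≤ P (Ts n) + ∑' j, q (j + n) := by
    intro n
    refine le_trans (measure_mono (hincl n)) ?_
    refine le_trans (measure_union_le _ _) ?_
    rw [hNbnull, zero_add]
    refine le_trans (measure_union_le _ _) ?_
    refine add_le_add_right ?_ _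
    refine le_trans (measure_iUnion_le _) ?_
    exact ENNReal.tsum_le_tsum fun j => hGsub (j + n)
  have htail : Tendsto (fun n => ∑' j, q (j + n)) atTop (𝓝 0) :=
    ENNReal.tendsto_sum_nat_add q hqsum
  have hlim : Tendsto (fun n => P (Ts n) + ∑' j, q (j + n)) atTop (𝓝 0) := by
    have h := hTtend.add htail
    simpa using h
  exact tendsto_of_tendsto_of_tendsto_of_le_of_le tendsto_const_nhds hlim
    (fun n => zero_le) hbound
end
end
end
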